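/- arXiv:0903.2434 — 7 statements merged into one kernel-verified Lean document; each statement's English description precedes it below -/
import Mathlib

section
/- Every symmetric lattice polynomial function p : ℝⁿ → ℝ is an order statistic: there exists k ∈ [n] such that p(x) = x_{(k)} for all x ∈ ℝⁿ. -/
/-- Lattice polynomial functions: built from projections by pointwise min and max. -/
inductive IsLatticePoly {α : Type*} [LinearOrder α] (n : ℕ) : ((Fin n → α) → α) → Prop
  | proj (k : Fin n) : IsLatticePoly n (fun x => x k)
  | inf {p q : (Fin n → α) → α} : IsLatticePoly n p → IsLatticePoly n q →
      IsLatticePoly n (fun x => min (p x) (q x))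
  | sup {p q : (Fin n → α) → α} : IsLatticePoly n p → IsLatticePoly n q →
      IsLatticePoly n (fun x => max (p x) (q x))

/-- The `k`-th order statistic. -/
def orderStat {α : Type*} [LinearOrder α] {n : ℕ} (x : Fin n → α) (k : Fin n) : α :=
  x (Tuple.sort x k)

lemma latticePoly_range {n : ℕ} {p : (Fin n → ℝ) → ℝ} (hp : IsLatticePoly n p)
    (x : Fin n → ℝ) : ∃ k, p x = x k := by
  induction hp with
  | proj k => exact ⟨k, rfl⟩
  | inf hp hq ihp ihq =>
    obtain ⟨k, hk⟩ := ihp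
    obtain ⟨l, hl⟩ := ihq
    simp only [hk, hl]
    rcases le_total (x k) (x l) with h | h
    · exact ⟨k, min_eq_left h⟩
    · exact ⟨l, min_eq_right h⟩
  | sup hp hq ihp ihq =>
    obtain ⟨k, hk⟩ := ihp
    obtain ⟨l, hl⟩ := ihq
    simp only [hk, hl]
    rcases le_total (x k) (x l) with h | h
    · exact ⟨l, max_eq_right h⟩
    · exact ⟨k, max_eq_left h⟩

lemma latticePoly_comp {n : ℕ} {p : (Fin n → ℝ) → ℝ} (hp : IsLatticePoly n p)
    {f : ℝ → ℝ} (hf : Monotone f) (x : Fin n → ℝ) : p (f ∘ x) = f (p x) := by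
  induction hp with
  | proj k => rfl
  | inf hp hq ihp ihq => simp [ihp, ihq, hf.map_min]
  | sup hp hq ihp ihq => simp [ihp, ihq, hf.map_max]

/-- Every symmetric lattice polynomial function is an order statistic. -/
theorem symmetric_latticePoly_is_orderStat (n : ℕ) (p : (Fin n → ℝ) → ℝ)
    (hp : IsLatticePoly n p)
    (hsym : ∀ (σ : Equiv.Perm (Fin n)) (x : Fin n → ℝ), p (x ∘ σ) = p x) :
    ∃ k : Fin n, ∀ x : Fin n → ℝ, p x = orderStat x k := by
  set v : Fin n → ℝ := fun i => (i : ℝ) with hv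
  obtain ⟨k, hk⟩ := latticePoly_range hp v
  have hn : 0 < n := k.pos
  refine ⟨k, fun x => ?_⟩
  set y : Fin n → ℝ := x ∘ Tuple.sort x with hy
  have hmono : Monotone y := Tuple.monotone_sort x
  set f : ℝ → ℝ := fun t => y ⟨min ⌈t⌉₊ (n - 1), by omega⟩ with hf
  have hfmono : Monotone f := by
    intro a b hab
    exact hmono (Fin.mk_le_mk.mpr (min_le_min (Nat.ceil_le_ceil hab) le_rfl))
  have hfv : ∀ i : Fin n, f (v i) = y i := by
    intro i
    have : (⌈((i : ℕ) : ℝ)⌉₊) = (i : ℕ) := Nat.ceil_natCast _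
    simp only [hf, hv, this]
    congr 1
    exact Fin.ext (by simp; omega)
  have hyfv : y = f ∘ v := funext fun i => (hfv i).symm
  calc p x = p y := (hsym (Tuple.sort x) x).symm
    _ = p (f ∘ v) := by rw [hyfv]
    _ = f (p v) := latticePoly_comp hp hfmono v
    _ = f (v k) := by rw [hk]
    _ = y k := hfv k
    _ = orderStat x k := rfl
end

section
/- Every order invariant function F : Eⁿ → E is discretizable: F(x) ∈ {x_1,…,x_n} ∪ B[E] for all x ∈ Eⁿ. In particular, if E is an open interval then every order invariant function is internal: min_i x_i ≤ F(x) ≤ max_i x_i. -/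
/-- A piecewise map of `ℝ` fixing everything outside `Ioo a b` and moving
interior points of `Ioo a b` downward. -/
noncomputable def psiAux (a b : ℝ) : ℝ → ℝ := fun t =>
  if t ∈ Set.Ioo a b then a + (t - a) ^ 2 / (b - a) else t

lemma psiAux_id {a b t : ℝ} (h : t ∉ Set.Ioo a b) : psiAux a b t = t := if_neg h

lemma psiAux_eq {a b t : ℝ} (h : t ∈ Set.Ioo a b) :
    psiAux a b t = a + (t - a) ^ 2 / (b - a) := if_pos h

lemma psiAux_mem {a b : ℝ} (hab : a < b) {t : ℝ} (h : t ∈ Set.Ioo a b) :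
    psiAux a b t ∈ Set.Ioo a b := by
  have hba : 0 < b - a := sub_pos.mpr hab
  have h1 : 0 < t - a := sub_pos.mpr h.1
  rw [psiAux_eq h]
  constructor
  · have : 0 < (t - a) ^ 2 / (b - a) := by positivity
    linarith
  · have h2 : (t - a) ^ 2 / (b - a) < b - a := by
      rw [div_lt_iff₀ hba]
      nlinarith [h.2]
    linarith

lemma psiAux_strictMono {a b : ℝ} (hab : a < b) : StrictMono (psiAux a b) := by
  have hba : 0 < b - a := sub_pos.mpr hab
  intro s t hst
  by_cases hs : s ∈ Set.Ioo a b <;> by_cases ht : t ∈ Set.Ioo a b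
  · rw [psiAux_eq hs, psiAux_eq ht]
    have h1 : (s - a) ^ 2 < (t - a) ^ 2 := by nlinarith [hs.1]
    have := (div_lt_div_iff_of_pos_right hba).mpr h1
    linarith
  · have hbt : b ≤ t := by
      by_contra h
      exact ht ⟨hs.1.trans hst, lt_of_not_ge h⟩
    calc psiAux a b s < b := (psiAux_mem hab hs).2
      _ ≤ t := hbt
      _ = psiAux a b t := (psiAux_id ht).symm
  · have hsa : s ≤ a := by
      by_contra h
      exact hs ⟨lt_of_not_ge h, hst.trans ht.2⟩
    calc psiAux a b s = s := psiAux_id hs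
      _ ≤ a := hsa
      _ < psiAux a b t := (psiAux_mem hab ht).1
  · rw [psiAux_id hs, psiAux_id ht]; exact hst

lemma psiAux_surj {a b : ℝ} (hab : a < b) (u : ℝ) :
    ∃ t, psiAux a b t = u ∧ (t ∈ Set.Ioo a b ∨ t = u) := by
  have hba : 0 < b - a := sub_pos.mpr hab
  by_cases hu : u ∈ Set.Ioo a b
  · refine ⟨a + Real.sqrt ((u - a) * (b - a)), ?_, Or.inl ?_⟩
    · have hnn : (0:ℝ) ≤ (u - a) * (b - a) := by nlinarith [hu.1]
      have hmem : a + Real.sqrt ((u - a) * (b - a)) ∈ Set.Ioo a b := by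
        constructor
        · have : 0 < Real.sqrt ((u - a) * (b - a)) :=
            Real.sqrt_pos.mpr (by nlinarith [hu.1])
          linarith
        · have : Real.sqrt ((u - a) * (b - a)) < b - a :=
            (Real.sqrt_lt' hba).mpr (by nlinarith [hu.2])
          linarith
      rw [psiAux_eq hmem]
      have : (a + Real.sqrt ((u - a) * (b - a)) - a) ^ 2 = (u - a) * (b - a) := by
        rw [add_sub_cancel_left, Real.sq_sqrt hnn]
      rw [this, mul_div_assoc, div_self hba.ne', mul_one]
      ring
    · have hnn : (0:ℝ) ≤ (u - a) * (b - a) := by nlinarith [hu.1]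
      constructor
      · have : 0 < Real.sqrt ((u - a) * (b - a)) :=
          Real.sqrt_pos.mpr (by nlinarith [hu.1])
        linarith
      · have : Real.sqrt ((u - a) * (b - a)) < b - a :=
          (Real.sqrt_lt' hba).mpr (by nlinarith [hu.2])
        linarith
  · exact ⟨u, psiAux_id hu, Or.inr rfl⟩

/-- Every order invariant function `F : Eⁿ → E` on an interval `E ⊆ ℝ` is discretizable:
`F x ∈ {x₁,…,xₙ} ∪ B[E]` where `B[E] = E \ interior E`; in particular, if `E` is open
then `F` is internal. -/
theorem orderInvariant_discretizable_and_internal (n : ℕ) (E : Set ℝ)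
    (hE : E.OrdConnected) (F : (Fin n → E) → E)
    (hinv : ∀ φ : E → E, StrictMono φ → Function.Bijective φ →
      ∀ x : Fin n → E, F (fun i => φ (x i)) = φ (F x)) :
    (∀ x : Fin n → E, (∃ i, F x = x i) ∨ (F x : ℝ) ∈ E \ interior E) ∧
    (IsOpen E → ∀ x : Fin n → E,
      sInf (Set.range fun i => (x i : ℝ)) ≤ (F x : ℝ) ∧
      (F x : ℝ) ≤ sSup (Set.range fun i => (x i : ℝ))) := by
  have part1 : ∀ x : Fin n → E, (∃ i, F x = x i) ∨ (F x : ℝ) ∈ E \ interior E := by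
    intro x
    by_cases hint : (F x : ℝ) ∈ interior E
    · left
      by_contra hno
      push_neg at hno
      set y : ℝ := (F x : ℝ) with hy
      have hney : ∀ i, (x i : ℝ) ≠ y := by
        intro i h
        exact hno i (Subtype.ext h.symm)
      obtain ⟨ε, hε, hball⟩ := Metric.isOpen_iff.mp isOpen_interior y hint
      have hball' : Set.Ioo (y - ε) (y + ε) ⊆ E := by
        rw [← Real.ball_eq_Ioo]
        exact fun t ht => interior_subset (hball ht)
      -- choose a and b avoiding all the x i
      obtain ⟨a, b, hab, hay, hyb, hIoo, hxout⟩ :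
          ∃ a b : ℝ, a < b ∧ a < y ∧ y < b ∧ Set.Ioo a b ⊆ E ∧
            ∀ i, (x i : ℝ) ∉ Set.Ioo a b := by
        have hfinR : (Set.range fun i => (x i : ℝ)).Finite := Set.finite_range _
        set Sa : Set ℝ := insert (y - ε / 2) ((Set.range fun i => (x i : ℝ)) ∩ Set.Iio y)
          with hSa
        set Sb : Set ℝ := insert (y + ε / 2) ((Set.range fun i => (x i : ℝ)) ∩ Set.Ioi y)
          with hSb
        have hSa_fin : Sa.Finite := (hfinR.inter_of_left _).insert _
        have hSb_fin : Sb.Finite := (hfinR.inter_of_left _).insert _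
        have hSa_ne : Sa.Nonempty := Set.insert_nonempty _ _
        have hSb_ne : Sb.Nonempty := Set.insert_nonempty _ _
        have haySa : ∀ t ∈ Sa, t < y := by
          intro t ht
          rcases ht with h | h
          · rw [h]; linarith
          · exact h.2
        have hybSb : ∀ t ∈ Sb, y < t := by
          intro t ht
          rcases ht with h | h
          · rw [h]; linarith
          · exact h.2
        have hay : sSup Sa < y := haySa _ (hSa_ne.csSup_mem hSa_fin)
        have hyb : y < sInf Sb := hybSb _ (hSb_ne.csInf_mem hSb_fin)
        have ha0 : y - ε / 2 ≤ sSup Sa :=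
          le_csSup hSa_fin.bddAbove (Set.mem_insert _ _)
        have hb0 : sInf Sb ≤ y + ε / 2 :=
          csInf_le hSb_fin.bddBelow (Set.mem_insert _ _)
        refine ⟨sSup Sa, sInf Sb, hay.trans hyb, hay, hyb, ?_, ?_⟩
        · intro t ht
          apply hball'
          exact ⟨by linarith [ht.1], by linarith [ht.2]⟩
        · intro i hi
          rcases lt_trichotomy (x i : ℝ) y with h | h | h
          · have : (x i : ℝ) ≤ sSup Sa :=
              le_csSup hSa_fin.bddAbove (Set.mem_insert_of_mem _ ⟨⟨i, rfl⟩, h⟩)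
            exact absurd hi.1 (not_lt.mpr this)
          · exact hney i h
          · have : sInf Sb ≤ (x i : ℝ) :=
              csInf_le hSb_fin.bddBelow (Set.mem_insert_of_mem _ ⟨⟨i, rfl⟩, h⟩)
            exact absurd hi.2 (not_lt.mpr this)
      -- define φ
      have hmemE : ∀ t : E, psiAux a b (t : ℝ) ∈ E := by
        intro t
        by_cases h : (t : ℝ) ∈ Set.Ioo a b
        · exact hIoo (psiAux_mem hab h)
        · rw [psiAux_id h]; exact t.2
      set φ : E → E := fun t => ⟨psiAux a b (t : ℝ), hmemE t⟩ with hφ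
      have hmono : StrictMono φ := by
        intro s t h
        exact Subtype.mk_lt_mk.mpr (psiAux_strictMono hab (Subtype.coe_lt_coe.mpr h))
      have hbij : Function.Bijective φ := by
        constructor
        · exact hmono.injective
        · intro u
          obtain ⟨t, ht, hcase⟩ := psiAux_surj hab (u : ℝ)
          have htE : t ∈ E := by
            rcases hcase with h | h
            · exact hIoo h
            · rw [h]; exact u.2
          exact ⟨⟨t, htE⟩, Subtype.ext ht⟩
      have hkey := hinv φ hmono hbij x
      have hfix : (fun i => φ (x i)) = x := by
        funext i
        exact Subtype.ext (psiAux_id (hxout i))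
      rw [hfix] at hkey
      have hcoe : y = psiAux a b y := congrArg Subtype.val hkey
      have hyIoo : y ∈ Set.Ioo a b := ⟨hay, hyb⟩
      rw [psiAux_eq hyIoo] at hcoe
      have hba : 0 < b - a := sub_pos.mpr hab
      have hlt : (y - a) ^ 2 / (b - a) < y - a := by
        rw [div_lt_iff₀ hba]
        nlinarith
      linarith
    · exact Or.inr ⟨(F x).2, hint⟩
  refine ⟨part1, fun hopen x => ?_⟩
  rcases part1 x with ⟨i, hi⟩ | h
  · have hfin : (Set.range fun i => (x i : ℝ)).Finite := Set.finite_range _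
    have hmem : (F x : ℝ) ∈ Set.range fun i => (x i : ℝ) := ⟨i, by rw [hi]⟩
    exact ⟨csInf_le hfin.bddBelow hmem, le_csSup hfin.bddAbove hmem⟩
  · rw [hopen.interior_eq] at h
    exact (h.2 h.1).elim
end

section
/- Let E be an open real interval. A function F : Eⁿ → E is a nondecreasing order invariant function if and only if it is a lattice polynomial function (restricted to Eⁿ). -/
open Set

namespace LatPolyAux

/-- Glue two order isomorphisms of ℝ that agree at a point. -/
lemma glue (p : ℝ) (ψ₁ ψ₂ : ℝ ≃o ℝ) (hp : ψ₁ p = ψ₂ p) :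
    ∃ ψ : ℝ ≃o ℝ, ∀ t, ψ t = if t ≤ p then ψ₁ t else ψ₂ t := by
  set f : ℝ → ℝ := fun t => if t ≤ p then ψ₁ t else ψ₂ t with hf
  have hmono : StrictMono f := by
    intro s t hst
    by_cases hs : s ≤ p
    · by_cases ht : t ≤ p
      · simpa [hf, hs, ht] using ψ₁.strictMono hst
      · simp only [hf, if_pos hs, if_neg ht]
        calc ψ₁ s ≤ ψ₁ p := ψ₁.monotone hs
          _ = ψ₂ p := hp
          _ < ψ₂ t := ψ₂.strictMono (lt_of_not_ge ht)
    · have ht : ¬ t ≤ p := fun h => hs (hst.le.trans h)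
      simpa [hf, hs, ht] using ψ₂.strictMono hst
  have hsurj : Function.Surjective f := by
    intro y
    by_cases hy : y ≤ ψ₁ p
    · refine ⟨ψ₁.symm y, ?_⟩
      have h1 : ψ₁.symm y ≤ p := by
        rw [← ψ₁.symm_apply_apply p]
        exact ψ₁.symm.monotone hy
      simp [hf, h1]
    · refine ⟨ψ₂.symm y, ?_⟩
      have h1 : p < ψ₂.symm y := by
        rw [← ψ₂.symm_apply_apply p]
        exact ψ₂.symm.strictMono (hp ▸ lt_of_not_ge hy)
      simp [hf, not_le.mpr h1]
  exact ⟨StrictMono.orderIsoOfSurjective f hmono hsurj, fun t => rfl⟩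

lemma affine (k r : ℝ) (hk : 0 < k) : ∃ ψ : ℝ ≃o ℝ, ∀ t, ψ t = k * t + r := by
  have hmono : StrictMono (fun t : ℝ => k * t + r) := by
    intro s t h; dsimp only; nlinarith
  have hsurj : Function.Surjective (fun t : ℝ => k * t + r) := by
    intro y; refine ⟨(y - r) / k, ?_⟩; field_simp; ring
  exact ⟨StrictMono.orderIsoOfSurjective _ hmono hsurj, fun t => rfl⟩

/-- An affine order iso of ℝ through two prescribed points. -/
lemma affine2 {a b c d : ℝ} (hab : a < b) (hcd : c < d) :
    ∃ ψ : ℝ ≃o ℝ, ψ a = c ∧ ψ b = d := by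
  have hba : b - a ≠ 0 := by linarith
  obtain ⟨ψ, hψ⟩ := affine ((d - c) / (b - a)) (c - (d - c) / (b - a) * a)
    (div_pos (by linarith) (by linarith))
  refine ⟨ψ, by rw [hψ]; ring, ?_⟩
  rw [hψ]
  field_simp
  ring


/-- A "compactly supported" piecewise affine order iso of ℝ through three prescribed points,
which is the identity outside `[u, w]`. -/
lemma master {u p₁ p₂ p₃ w q₁ q₂ q₃ : ℝ}
    (h1 : u < p₁) (h2 : p₁ < p₂) (h3 : p₂ < p₃) (h4 : p₃ < w)
    (g1 : u < q₁) (g2 : q₁ < q₂) (g3 : q₂ < q₃) (g4 : q₃ < w) :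
    ∃ ψ : ℝ ≃o ℝ, ψ p₁ = q₁ ∧ ψ p₂ = q₂ ∧ ψ p₃ = q₃ ∧
      ∀ t, (t ≤ u ∨ w ≤ t) → ψ t = t := by
  obtain ⟨A₀, hA₀u, hA₀p⟩ := affine2 h1 g1
  obtain ⟨A₁, hA₁p, hA₁q⟩ := affine2 h2 g2
  obtain ⟨A₂, hA₂p, hA₂q⟩ := affine2 h3 g3
  obtain ⟨A₃, hA₃p, hA₃w⟩ := affine2 h4 g4
  obtain ⟨ψ₄, hψ₄⟩ := glue w A₃ (OrderIso.refl ℝ) (by simpa using hA₃w)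
  obtain ⟨ψ₃, hψ₃⟩ := glue p₃ A₂ ψ₄ (by rw [hψ₄, if_pos h4.le, hA₂q, hA₃p])
  obtain ⟨ψ₂, hψ₂⟩ := glue p₂ A₁ ψ₃ (by rw [hψ₃, if_pos h3.le, hA₁q, hA₂p])
  obtain ⟨ψ₁, hψ₁⟩ := glue p₁ A₀ ψ₂ (by rw [hψ₂, if_pos h2.le, hA₀p, hA₁p])
  obtain ⟨ψ, hψ⟩ := glue u (OrderIso.refl ℝ) ψ₁ (by rw [hψ₁, if_pos h1.le, hA₀u]; rfl)
  refine ⟨ψ, ?_, ?_, ?_, ?_⟩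
  · rw [hψ, if_neg (not_le.mpr h1), hψ₁, if_pos le_rfl, hA₀p]
  · rw [hψ, if_neg (not_le.mpr (h1.trans h2)), hψ₁, if_neg (not_le.mpr h2), hψ₂,
      if_pos le_rfl, hA₁q]
  · rw [hψ, if_neg (not_le.mpr ((h1.trans h2).trans h3)), hψ₁,
      if_neg (not_le.mpr (h2.trans h3)), hψ₂, if_neg (not_le.mpr h3), hψ₃,
      if_pos le_rfl, hA₂q]
  · rintro t (ht | ht)
    · rw [hψ, if_pos ht]; rfl
    · have c1 : u < t := lt_of_lt_of_le (by linarith) ht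
      have c2 : ¬ t ≤ p₁ := not_le.mpr (lt_of_lt_of_le (by linarith) ht)
      have c3 : ¬ t ≤ p₂ := not_le.mpr (lt_of_lt_of_le (by linarith) ht)
      have c4 : ¬ t ≤ p₃ := not_le.mpr (lt_of_lt_of_le (by linarith) ht)
      rw [hψ, if_neg (not_le.mpr c1), hψ₁, if_neg c2, hψ₂, if_neg c3, hψ₃, if_neg c4, hψ₄]
      rcases eq_or_lt_of_le ht with rfl | hlt
      · rw [if_pos le_rfl, hA₃w]
      · rw [if_neg (not_le.mpr hlt)]; rfl


variable {E : Set ℝ}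

lemma exists_below (hopen : IsOpen E) {t : ℝ} (ht : t ∈ E) : ∃ u ∈ E, u < t := by
  obtain ⟨ε, hε, hball⟩ := Metric.isOpen_iff.1 hopen t ht
  refine ⟨t - ε / 2, hball ?_, by linarith⟩
  rw [Real.ball_eq_Ioo]
  exact ⟨by linarith, by linarith⟩

lemma exists_above (hopen : IsOpen E) {t : ℝ} (ht : t ∈ E) : ∃ u ∈ E, t < u := by
  obtain ⟨ε, hε, hball⟩ := Metric.isOpen_iff.1 hopen t ht
  refine ⟨t + ε / 2, hball ?_, by linarith⟩
  rw [Real.ball_eq_Ioo]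
  exact ⟨by linarith, by linarith⟩

/-- Restrict an automorphism of ℝ supported in `[u,w] ⊆ E` to an automorphism of `E`. -/
lemma aut (hE : E.OrdConnected) (ψ : ℝ ≃o ℝ) {u w : ℝ}
    (hu : u ∈ E) (hw : w ∈ E)
    (hfix : ∀ t, (t ≤ u ∨ w ≤ t) → ψ t = t) :
    ∃ φ : E → E, StrictMono φ ∧ Function.Bijective φ ∧ ∀ t : E, (φ t : ℝ) = ψ t := by
  have hfix' : ∀ t, (t ≤ u ∨ w ≤ t) → ψ.symm t = t := by
    intro t ht
    conv_lhs => rw [← hfix t ht]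
    exact ψ.symm_apply_apply t
  have key : ∀ (χ : ℝ ≃o ℝ), (∀ t, (t ≤ u ∨ w ≤ t) → χ t = t) →
      ∀ s : ℝ, s ∈ E → χ s ∈ E := by
    intro χ hχ s hs
    rcases le_or_gt s u with h | h
    · rw [hχ s (Or.inl h)]; exact hs
    rcases le_or_gt w s with h' | h'
    · rw [hχ s (Or.inr h')]; exact hs
    · refine hE.out hu hw ⟨?_, ?_⟩
      · rw [← hχ u (Or.inl le_rfl)]; exact χ.monotone h.le
      · rw [← hχ w (Or.inr le_rfl)]; exact χ.monotone h'.le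
  refine ⟨fun t => ⟨ψ t, key ψ hfix t t.2⟩, ?_, ⟨?_, ?_⟩, fun t => rfl⟩
  · intro s t hst
    exact Subtype.mk_lt_mk.2 (ψ.strictMono (Subtype.coe_lt_coe.2 hst))
  · intro s t hst
    have := congrArg Subtype.val hst
    exact Subtype.ext (ψ.injective this)
  · intro s
    refine ⟨⟨ψ.symm s, key ψ.symm hfix' s s.2⟩, ?_⟩
    exact Subtype.ext (ψ.apply_symm_apply s)

/-- An automorphism of `E` fixing `v` and `V` but moving `c`. -/
lemma move (hopen : IsOpen E) (hE : E.OrdConnected) (v V c : E) (hvV : v ≤ V)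
    (hcv : c ≠ v) (hcV : c ≠ V) :
    ∃ φ : E → E, StrictMono φ ∧ Function.Bijective φ ∧ φ v = v ∧ φ V = V ∧ φ c ≠ c := by
  set A := (v : ℝ); set B := (V : ℝ); set C := (c : ℝ)
  have hAB : A ≤ B := hvV
  have hmin : min A C ∈ E := by
    rcases min_choice A C with h | h
    · rw [h]; exact v.2
    · rw [h]; exact c.2
  have hmax : max B C ∈ E := by
    rcases max_choice B C with h | h
    · rw [h]; exact V.2
    · rw [h]; exact c.2
  obtain ⟨u, huE, hu⟩ := exists_below hopen hmin
  obtain ⟨w, hwE, hw⟩ := exists_above hopen hmax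
  have huA : u < A := lt_of_lt_of_le hu (min_le_left _ _)
  have huC : u < C := lt_of_lt_of_le hu (min_le_right _ _)
  have hwB : B < w := lt_of_le_of_lt (le_max_left _ _) hw
  have hwC : C < w := lt_of_le_of_lt (le_max_right _ _) hw
  have hCA : C ≠ A := fun h => hcv (Subtype.ext h)
  have hCB : C ≠ B := fun h => hcV (Subtype.ext h)
  have main : ∃ ψ : ℝ ≃o ℝ, ψ A = A ∧ ψ B = B ∧ ψ C ≠ C ∧
      ∀ t, (t ≤ u ∨ w ≤ t) → ψ t = t := by
    rcases lt_trichotomy C A with hlt | heq | hgt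
    · -- C < A
      rcases eq_or_lt_of_le hAB with heq | hABlt
      · obtain ⟨ψ, e1, e2, e3, e4⟩ := master huC hlt (show A < (A + w)/2 by linarith)
          (show (A + w)/2 < w by linarith) (show u < (u + C)/2 by linarith)
          (show (u + C)/2 < A by linarith) (show A < (A + w)/2 by linarith)
          (show (A + w)/2 < w by linarith)
        exact ⟨ψ, e2, by rw [← heq]; exact e2, by rw [e1]; intro h; linarith, e4⟩
      · obtain ⟨ψ, e1, e2, e3, e4⟩ := master huC hlt hABlt hwB
          (show u < (u + C)/2 by linarith) (show (u + C)/2 < A by linarith) hABlt hwB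
        exact ⟨ψ, e2, e3, by rw [e1]; intro h; linarith, e4⟩
    · exact absurd heq hCA
    · -- A < C
      rcases lt_trichotomy C B with hltB | heqB | hgtB
      · -- A < C < B
        obtain ⟨ψ, e1, e2, e3, e4⟩ := master huA hgt hltB hwB huA
          (show A < (C + B)/2 by linarith) (show (C + B)/2 < B by linarith) hwB
        exact ⟨ψ, e1, e3, by rw [e2]; intro h; linarith, e4⟩
      · exact absurd heqB hCB
      · -- B < C
        rcases eq_or_lt_of_le hAB with heq | hABlt
        · obtain ⟨ψ, e1, e2, e3, e4⟩ := master (show u < (u + A)/2 by linarith)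
            (show (u + A)/2 < A by linarith) (show A < C by rw [heq]; exact hgtB) hwC
            (show u < (u + A)/2 by linarith) (show (u + A)/2 < A by linarith)
            (show A < (C + w)/2 by rw [heq]; linarith) (show (C + w)/2 < w by linarith)
          exact ⟨ψ, e2, by rw [← heq]; exact e2, by rw [e3]; intro h; linarith, e4⟩
        · obtain ⟨ψ, e1, e2, e3, e4⟩ := master huA hABlt hgtB hwC huA hABlt
            (show B < (C + w)/2 by linarith) (show (C + w)/2 < w by linarith)
          exact ⟨ψ, e1, e2, by rw [e3]; intro h; linarith, e4⟩
  obtain ⟨ψ, hψA, hψB, hψC, hψfix⟩ := main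
  obtain ⟨φ, hm, hb, hco⟩ := aut hE ψ huE hwE hψfix
  refine ⟨φ, hm, hb, Subtype.ext (by rw [hco]; exact hψA),
    Subtype.ext (by rw [hco]; exact hψB), fun h => hψC (by rw [← hco]; exact congrArg Subtype.val h)⟩

/-- An automorphism of `E` sending `a ↦ v`, `b ↦ V`. -/
lemma trans2 (hopen : IsOpen E) (hE : E.OrdConnected) (a b v V : E)
    (hab : a < b) (hvV : v < V) :
    ∃ φ : E → E, StrictMono φ ∧ Function.Bijective φ ∧ φ a = v ∧ φ b = V := by
  set A := (a : ℝ); set B := (b : ℝ); set A' := (v : ℝ); set B' := (V : ℝ)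
  have hAB : A < B := hab
  have hAB' : A' < B' := hvV
  have hmin : min A A' ∈ E := by
    rcases min_choice A A' with h | h
    · rw [h]; exact a.2
    · rw [h]; exact v.2
  have hmax : max B B' ∈ E := by
    rcases max_choice B B' with h | h
    · rw [h]; exact b.2
    · rw [h]; exact V.2
  obtain ⟨u, huE, hu⟩ := exists_below hopen hmin
  obtain ⟨w, hwE, hw⟩ := exists_above hopen hmax
  have huA : u < A := lt_of_lt_of_le hu (min_le_left _ _)
  have huA' : u < A' := lt_of_lt_of_le hu (min_le_right _ _)
  have hwB : B < w := lt_of_le_of_lt (le_max_left _ _) hw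
  have hwB' : B' < w := lt_of_le_of_lt (le_max_right _ _) hw
  set M := max B B'
  have hBM : B ≤ M := le_max_left _ _
  have hB'M : B' ≤ M := le_max_right _ _
  have hMw : M < w := hw
  obtain ⟨ψ, e1, e2, e3, e4⟩ := master huA hAB (show B < (M + w)/2 by linarith)
    (show (M + w)/2 < w by linarith) huA' hAB' (show B' < (M + w)/2 by linarith)
    (show (M + w)/2 < w by linarith)
  obtain ⟨φ, hm, hb, hco⟩ := aut hE ψ huE hwE e4
  exact ⟨φ, hm, hb, Subtype.ext (by rw [hco]; exact e1), Subtype.ext (by rw [hco]; exact e2)⟩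


section Fmach
variable {n : ℕ} {F : (Fin n → E) → E}
variable (hopen : IsOpen E) (hE : E.OrdConnected)
variable (hmono : Monotone F)
variable (hinv : ∀ φ : E → E, StrictMono φ → Function.Bijective φ →
    ∀ x : Fin n → E, F (fun i => φ (x i)) = φ (F x))

include hopen hE hinv

lemma Fconst (t : E) : F (fun _ => t) = t := by
  by_contra hne
  obtain ⟨φ, hm, hb, hft, _, hmove⟩ := move hopen hE t t (F fun _ => t) le_rfl hne hne
  have h := hinv φ hm hb (fun _ => t)
  simp only [hft] at h
  exact hmove h.symm

/-- Dichotomy: on a two-valued vector `F` takes one of the two values. -/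
lemma dichotomy (S : Finset (Fin n)) [DecidablePred (· ∈ S)] (v V : E) (hvV : v < V) :
    F (fun i => if i ∈ S then V else v) = v ∨ F (fun i => if i ∈ S then V else v) = V := by
  by_contra h
  push_neg at h
  obtain ⟨φ, hm, hb, hv, hV, hc⟩ := move hopen hE v V _ hvV.le h.1 h.2
  have h2 := hinv φ hm hb (fun i => if i ∈ S then V else v)
  have h3 : (fun i => φ (if i ∈ S then V else v)) = (fun i => if i ∈ S then V else v) := by
    funext i
    rw [apply_ite φ, hv, hV]
  rw [h3] at h2
  exact hc h2.symm

/-- Transport: the value pattern of `F` on two-valued vectors doesn't depend on the values. -/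
lemma transportVec (S : Finset (Fin n)) [DecidablePred (· ∈ S)] {a b v V : E}
    (hab : a < b) (hvV : v < V)
    (h : F (fun i => if i ∈ S then b else a) = b) :
    F (fun i => if i ∈ S then V else v) = V := by
  obtain ⟨φ, hm, hb', ha, hbV⟩ := trans2 hopen hE a b v V hab hvV
  have h2 := hinv φ hm hb' (fun i => if i ∈ S then b else a)
  rw [h] at h2
  have h3 : (fun i => φ (if i ∈ S then b else a)) = (fun i => if i ∈ S then V else v) := by
    funext i
    rw [apply_ite φ, ha, hbV]
  rw [h3] at h2
  rw [h2, hbV]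

end Fmach

lemma isLP_inf' {α : Type*} [LinearOrder α] {n : ℕ} (S : Finset (Fin n)) (hS : S.Nonempty) :
    IsLatticePoly n (fun x : Fin n → α => S.inf' hS x) := by
  induction hS using Finset.Nonempty.cons_induction with
  | singleton a => simpa using IsLatticePoly.proj a
  | cons a s h hs ih =>
    have heq : (fun x : Fin n → α => (Finset.cons a s h).inf' (Finset.cons_nonempty h) x)
        = (fun x => min (x a) (s.inf' hs x)) := by
      funext x
      rw [Finset.inf'_cons (H := hs)]
    rw [heq]
    exact IsLatticePoly.inf (IsLatticePoly.proj a) ih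

lemma isLP_sup' {α : Type*} [LinearOrder α] {n : ℕ} {β : Type*} (T : Finset β)
    (g : β → (Fin n → α) → α) :
    ∀ (hT : T.Nonempty), (∀ S ∈ T, IsLatticePoly n (g S)) →
      IsLatticePoly n (fun x => T.sup' hT (fun S => g S x)) := by
  induction T using Finset.cons_induction with
  | empty => intro h; exact absurd h (by simp)
  | cons a s ha ih =>
    intro hT hg
    rcases s.eq_empty_or_nonempty with rfl | hs
    · simpa using hg a (by simp)
    · have heq : (fun x => (Finset.cons a s ha).sup' hT (fun S => g S x))
          = (fun x => max (g a x) (s.sup' hs (fun S => g S x))) := by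
        funext x
        rw [Finset.sup'_cons (H := hs)]
      rw [heq]
      exact IsLatticePoly.sup (hg a (by simp)) (ih hs fun S hS => hg S (by simp [hS]))


end LatPolyAux

open LatPolyAux in
/-- On an open real interval `E`, the nondecreasing order invariant functions
`F : Eⁿ → E` are exactly the lattice polynomial functions. -/
theorem nondecreasing_orderInvariant_iff_latticePoly (n : ℕ) (E : Set ℝ)
    (hne : E.Nonempty) (hopen : IsOpen E) (hE : E.OrdConnected)
    (F : (Fin n → E) → E) :
    (Monotone F ∧
      ∀ φ : E → E, StrictMono φ → Function.Bijective φ →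
        ∀ x : Fin n → E, F (fun i => φ (x i)) = φ (F x)) ↔
    IsLatticePoly n F := by
  constructor
  · rintro ⟨hmono, hinv⟩
    rcases Nat.eq_zero_or_pos n with hn0 | hn
    · subst hn0
      exfalso
      set c := F (fun i => i.elim0) with hc
      obtain ⟨u, huE, hu⟩ := exists_below hopen c.2
      have hlt : (⟨u, huE⟩ : E) < c := Subtype.mk_lt_mk.2 hu
      obtain ⟨φ, hm, hb, _, _, hmove⟩ :=
        move hopen hE ⟨u, huE⟩ ⟨u, huE⟩ c le_rfl hlt.ne' hlt.ne'
      have h := hinv φ hm hb (fun i => i.elim0)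
      have he : (fun i : Fin 0 => φ (Fin.elim0 i)) = (fun i : Fin 0 => Fin.elim0 i) :=
        funext fun i => i.elim0
      rw [he] at h
      exact hmove h.symm
    · classical
      have hU : (Finset.univ : Finset (Fin n)).Nonempty := ⟨⟨0, hn⟩, Finset.mem_univ _⟩
      obtain ⟨a0, ha0⟩ := hne
      obtain ⟨b0, hb0, hab0⟩ := exists_above hopen ha0
      have hab : (⟨a0, ha0⟩ : E) < ⟨b0, hb0⟩ := Subtype.mk_lt_mk.2 hab0
      set a : E := ⟨a0, ha0⟩
      set b : E := ⟨b0, hb0⟩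
      have hFc : ∀ t : E, F (fun _ => t) = t := Fconst hopen hE hinv
      have hFle : ∀ x, F x ≤ Finset.univ.sup' hU x := by
        intro x
        calc F x ≤ F (fun _ => Finset.univ.sup' hU x) :=
              hmono (fun i => Finset.le_sup' x (Finset.mem_univ i))
          _ = _ := hFc _
      have hFge : ∀ x, Finset.univ.inf' hU x ≤ F x := by
        intro x
        calc Finset.univ.inf' hU x = F (fun _ => Finset.univ.inf' hU x) := (hFc _).symm
          _ ≤ F x := hmono (fun i => Finset.inf'_le x (Finset.mem_univ i))
      set 𝒮 : Finset (Finset (Fin n)) :=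
        Finset.univ.filter
          (fun S => S.Nonempty ∧ F (fun i => if i ∈ S then b else a) = b) with h𝒮def
      have hUmem : Finset.univ ∈ 𝒮 := by
        rw [h𝒮def, Finset.mem_filter]
        refine ⟨Finset.mem_univ _, hU, ?_⟩
        have h1 : (fun i : Fin n => if i ∈ Finset.univ then b else a) = fun _ => b := by
          funext i; simp
        rw [h1]; exact hFc b
      have h𝒮 : 𝒮.Nonempty := ⟨_, hUmem⟩
      have hFP : F = fun x => 𝒮.sup' h𝒮
          (fun S => if h : S.Nonempty then S.inf' h x else x ⟨0, hn⟩) := by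
        funext x
        apply le_antisymm
        · set c := F x with hcdef
          set S := Finset.univ.filter (fun i => c ≤ x i) with hSdef
          have hSsub : ∀ i ∈ S, c ≤ x i := by
            intro i hi; rw [hSdef] at hi; exact (Finset.mem_filter.1 hi).2
          have hSne : S.Nonempty := by
            obtain ⟨j, hj, hj2⟩ := Finset.exists_mem_eq_sup' hU x
            refine ⟨j, ?_⟩
            rw [hSdef]
            exact Finset.mem_filter.2 ⟨Finset.mem_univ _, by rw [← hj2]; exact hFle x⟩
          have hSb : F (fun i => if i ∈ S then b else a) = b := by
            rcases eq_or_ne S Finset.univ with hSu | hSu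
            · have h1 : (fun i : Fin n => if i ∈ S then b else a) = fun _ => b := by
                funext i; rw [hSu]; simp
              rw [h1]; exact hFc b
            · have hk : ∃ k, k ∉ S := by
                by_contra h
                push_neg at h
                exact hSu (Finset.eq_univ_iff_forall.2 h)
              obtain ⟨k, hk⟩ := hk
              have hTne : Sᶜ.Nonempty := ⟨k, Finset.mem_compl.2 hk⟩
              set M := Finset.univ.sup' hU x with hMdef
              set m2 := Sᶜ.sup' hTne x with hm2def
              have hm2c : m2 < c := by
                obtain ⟨k', hk', hk'2⟩ := Finset.exists_mem_eq_sup' hTne x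
                have hkS : k' ∉ S := Finset.mem_compl.1 hk'
                have hnc : ¬ c ≤ x k' := by
                  intro hcx
                  exact hkS (by rw [hSdef]; exact Finset.mem_filter.2 ⟨Finset.mem_univ _, hcx⟩)
                rw [hm2def, hk'2]
                exact lt_of_not_ge hnc
              have hcM : c ≤ M := hFle x
              have hm2M : m2 < M := lt_of_lt_of_le hm2c hcM
              have hxw : x ≤ fun i => if i ∈ S then M else m2 := by
                intro i
                by_cases hiS : i ∈ S
                · simp only [if_pos hiS]
                  exact Finset.le_sup' x (Finset.mem_univ i)
                · simp only [if_neg hiS]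
                  exact Finset.le_sup' x (Finset.mem_compl.2 hiS)
              have hcw : c ≤ F (fun i => if i ∈ S then M else m2) := by
                rw [hcdef]; exact hmono hxw
              rcases dichotomy hopen hE hinv S m2 M hm2M with hlow | hhigh
              · rw [hlow] at hcw
                exact absurd hcw (not_le.2 hm2c)
              · exact transportVec hopen hE hinv S hm2M hab hhigh
          have hS𝒮 : S ∈ 𝒮 := by
            rw [h𝒮def]
            exact Finset.mem_filter.2 ⟨Finset.mem_univ _, hSne, hSb⟩
          have step : c ≤ (if h : S.Nonempty then S.inf' h x else x ⟨0, hn⟩) := by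
            rw [dif_pos hSne]
            exact Finset.le_inf' hSne x hSsub
          exact step.trans (Finset.le_sup' (fun S => if h : S.Nonempty then S.inf' h x else x ⟨0, hn⟩) hS𝒮)
        · apply Finset.sup'_le
          intro S hS𝒮
          rw [h𝒮def, Finset.mem_filter] at hS𝒮
          obtain ⟨-, hSne, hSb⟩ := hS𝒮
          rw [dif_pos hSne]
          have hmm' : Finset.univ.inf' hU x ≤ S.inf' hSne x :=
            Finset.le_inf' hSne x (fun i _ => Finset.inf'_le x (Finset.mem_univ i))
          rcases eq_or_lt_of_le hmm' with heq | hlt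
          · rw [← heq]; exact hFge x
          · have hz : F (fun i => if i ∈ S then S.inf' hSne x else Finset.univ.inf' hU x)
                = S.inf' hSne x :=
              transportVec hopen hE hinv S hab hlt hSb
            have hzx : (fun i => if i ∈ S then S.inf' hSne x else Finset.univ.inf' hU x) ≤ x := by
              intro i
              by_cases hiS : i ∈ S
              · simp only [if_pos hiS]; exact Finset.inf'_le x hiS
              · simp only [if_neg hiS]; exact Finset.inf'_le x (Finset.mem_univ i)
            calc S.inf' hSne x = F _ := hz.symm
              _ ≤ F x := hmono hzx
      rw [hFP]
      apply isLP_sup'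
      intro S hS
      rw [h𝒮def, Finset.mem_filter] at hS
      have hSne := hS.2.1
      have h1 : (fun x : Fin n → E => if h : S.Nonempty then S.inf' h x else x ⟨0, hn⟩)
          = fun x => S.inf' hSne x := by
        funext x; rw [dif_pos hSne]
      rw [h1]
      exact isLP_inf' S hSne
  · intro hF
    induction hF with
    | proj k => exact ⟨fun x y h => h k, fun φ hφ hb x => rfl⟩
    | inf hp hq ihp ihq =>
      obtain ⟨hpm, hpi⟩ := ihp
      obtain ⟨hqm, hqi⟩ := ihq
      refine ⟨fun x y h => min_le_min (hpm h) (hqm h), ?_⟩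
      intro φ hφ hb x
      show min _ _ = φ (min _ _)
      rw [hpi φ hφ hb x, hqi φ hφ hb x]
      exact (hφ.monotone.map_min).symm
    | sup hp hq ihp ihq =>
      obtain ⟨hpm, hpi⟩ := ihp
      obtain ⟨hqm, hqi⟩ := ihq
      refine ⟨fun x y h => max_le_max (hpm h) (hqm h), ?_⟩
      intro φ hφ hb x
      show max _ _ = φ (max _ _)
      rw [hpi φ hφ hb x, hqi φ hφ hb x]
      exact (hφ.monotone.map_max).symm
end

section
/- Let E be an open real interval. A function F : Eⁿ → E is a continuous order invariant function if and only if it is a lattice polynomial function (restricted to Eⁿ). -/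
open Set Real Filter

noncomputable def LP.oiIso (a : ℝ) : (Set.Ioi a) ≃o ℝ := by
  refine StrictMono.orderIsoOfSurjective (fun x => Real.log (x.1 - a)) ?_ ?_
  · intro x y h
    exact Real.log_lt_log (by have := x.2; simp only [mem_Ioi] at this; linarith)
      (by have : x.1 < y.1 := h; linarith)
  · intro y
    refine ⟨⟨a + Real.exp y, by simp [Real.exp_pos]⟩, ?_⟩
    show Real.log (a + Real.exp y - a) = y
    rw [add_sub_cancel_left, Real.log_exp]

noncomputable def LP.ioIso (b : ℝ) : (Set.Iio b) ≃o ℝ := by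
  refine StrictMono.orderIsoOfSurjective (fun x => -Real.log (b - x.1)) ?_ ?_
  · intro x y h
    have hy : (0:ℝ) < b - y.1 := by have := y.2; simp only [mem_Iio] at this; linarith
    have hl := Real.log_lt_log hy (by have : x.1 < y.1 := h; linarith : b - y.1 < b - x.1)
    show -Real.log (b - x.1) < -Real.log (b - y.1)
    linarith
  · intro y
    refine ⟨⟨b - Real.exp (-y), by simp [Real.exp_pos]⟩, ?_⟩
    show -Real.log (b - (b - Real.exp (-y))) = y
    rw [sub_sub_cancel, Real.log_exp, neg_neg]

noncomputable def LP.ooIso (a b : ℝ) (hab : a < b) : (Set.Ioo a b) ≃o ℝ := by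
  refine StrictMono.orderIsoOfSurjective
    (fun x => Real.log (x.1 - a) - Real.log (b - x.1)) ?_ ?_
  · intro x y h
    obtain ⟨hx1, hx2⟩ := x.2
    obtain ⟨hy1, hy2⟩ := y.2
    have h' : x.1 < y.1 := h
    have l1 := Real.log_lt_log (by linarith : (0:ℝ) < x.1 - a) (by linarith : x.1 - a < y.1 - a)
    have l2 := Real.log_lt_log (by linarith : (0:ℝ) < b - y.1) (by linarith : b - y.1 < b - x.1)
    show Real.log (x.1 - a) - Real.log (b - x.1) < Real.log (y.1 - a) - Real.log (b - y.1)
    linarith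
  · intro y
    have htpos : 0 < Real.exp y := Real.exp_pos y
    have h1t : (0:ℝ) < 1 + Real.exp y := by linarith
    have hba : (0:ℝ) < b - a := by linarith
    have hApos : (0:ℝ) < (b - a) * Real.exp y / (1 + Real.exp y) :=
      div_pos (mul_pos hba htpos) h1t
    have hBpos : (0:ℝ) < (b - a) / (1 + Real.exp y) := div_pos hba h1t
    have hxa : a + (b - a) * Real.exp y / (1 + Real.exp y) - a
        = (b - a) * Real.exp y / (1 + Real.exp y) := by ring
    have hbx : b - (a + (b - a) * Real.exp y / (1 + Real.exp y))
        = (b - a) / (1 + Real.exp y) := by field_simp; ring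
    have hmem : a + (b - a) * Real.exp y / (1 + Real.exp y) ∈ Set.Ioo a b := by
      constructor
      · linarith
      · have h2 : (b - a) * Real.exp y / (1 + Real.exp y) < b - a := by
          rw [div_lt_iff₀ h1t]; nlinarith
        linarith
    refine ⟨⟨_, hmem⟩, ?_⟩
    show Real.log _ - Real.log _ = y
    rw [hxa, hbx, ← Real.log_div (ne_of_gt hApos) (ne_of_gt hBpos)]
    have hA : (b - a) * Real.exp y / (1 + Real.exp y)
        = Real.exp y * ((b - a) / (1 + Real.exp y)) := by ring
    rw [hA, mul_div_assoc, div_self (ne_of_gt hBpos), mul_one, Real.log_exp]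
theorem LP.existsIso (E : Set ℝ) (hne : E.Nonempty) (hopen : IsOpen E)
    (hE : E.OrdConnected) : Nonempty (E ≃o ℝ) := by
  have hlt : ∀ x ∈ E, ∃ y ∈ E, y < x := by
    intro x hx
    obtain ⟨l, u, hxlu, hsub⟩ := mem_nhds_iff_exists_Ioo_subset.mp (hopen.mem_nhds hx)
    simp only [mem_Ioo] at hxlu
    exact ⟨(l + x) / 2, hsub ⟨by linarith [hxlu.1], by linarith [hxlu.1, hxlu.2]⟩,
      by linarith [hxlu.1]⟩
  have hgt : ∀ x ∈ E, ∃ y ∈ E, x < y := by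
    intro x hx
    obtain ⟨l, u, hxlu, hsub⟩ := mem_nhds_iff_exists_Ioo_subset.mp (hopen.mem_nhds hx)
    simp only [mem_Ioo] at hxlu
    exact ⟨(x + u) / 2, hsub ⟨by linarith [hxlu.1, hxlu.2], by linarith [hxlu.2]⟩,
      by linarith [hxlu.2]⟩
  have hpre := hE.isPreconnected
  have hmem := hpre.mem_intervals
  set a := sInf E with ha
  set b := sSup E with hb
  simp only [Set.mem_insert_iff, Set.mem_singleton_iff] at hmem
  have noMin : ∀ s : Set ℝ, E = s → a ∈ s → (∀ y ∈ s, a ≤ y) → False := by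
    rintro s rfl hmem' hmin
    obtain ⟨y, hy, hya⟩ := hlt a hmem'
    exact absurd (hmin y hy) (not_le.mpr hya)
  have noMax : ∀ s : Set ℝ, E = s → b ∈ s → (∀ y ∈ s, y ≤ b) → False := by
    rintro s rfl hmem' hmax
    obtain ⟨y, hy, hby⟩ := hgt b hmem'
    exact absurd (hmax y hy) (not_le.mpr hby)
  rcases hmem with h|h|h|h|h|h|h|h|h|h
  · have hab : a ≤ b := by
      obtain ⟨x, hx⟩ := hne; rw [h] at hx; exact le_trans hx.1 hx.2
    exact (noMin _ h ⟨le_refl _, hab⟩ (fun y hy => hy.1)).elim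
  · have hab : a < b := by
      obtain ⟨x, hx⟩ := hne; rw [h] at hx; exact lt_of_le_of_lt hx.1 hx.2
    exact (noMin _ h ⟨le_refl _, hab⟩ (fun y hy => hy.1)).elim
  · have hab : a < b := by
      obtain ⟨x, hx⟩ := hne; rw [h] at hx; exact lt_of_lt_of_le hx.1 hx.2
    exact (noMax _ h ⟨hab, le_refl _⟩ (fun y hy => hy.2)).elim
  · have hab : a < b := by
      obtain ⟨x, hx⟩ := hne; rw [h] at hx; exact lt_trans hx.1 hx.2
    rw [h]; exact ⟨LP.ooIso a b hab⟩
  · exact (noMin _ h (mem_Ici.mpr (le_refl a)) (fun y hy => mem_Ici.mp hy)).elim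
  · rw [h]; exact ⟨LP.oiIso a⟩
  · exact (noMax _ h (mem_Iic.mpr (le_refl b)) (fun y hy => mem_Iic.mp hy)).elim
  · rw [h]; exact ⟨LP.ioIso b⟩
  · rw [h]; exact ⟨OrderIso.Set.univ⟩
  · rw [h] at hne; exact absurd hne (by simp)

theorem LP.latticePoly_inf' {α : Type*} [LinearOrder α] {n : ℕ} {S : Finset (Fin n)}
    (hS : S.Nonempty) : IsLatticePoly n (fun x : Fin n → α => S.inf' hS x) := by
  induction hS using Finset.Nonempty.cons_induction with
  | singleton a => simp only [Finset.inf'_singleton]; exact IsLatticePoly.proj a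
  | cons a s h hs ih =>
    have e : (fun x : Fin n → α => (Finset.cons a s h).inf' (Finset.cons_nonempty h) x)
        = fun x => min (x a) (s.inf' hs x) := by
      funext x; rw [Finset.inf'_cons (H := hs)]
    rw [e]
    exact IsLatticePoly.inf (IsLatticePoly.proj a) ih

theorem LP.latticePoly_sup' {α : Type*} [LinearOrder α] {n : ℕ} {ι : Type*} {t : Finset ι}
    (ht : t.Nonempty) (f : ι → (Fin n → α) → α) (hf : ∀ a ∈ t, IsLatticePoly n (f a)) :
    IsLatticePoly n (fun x => t.sup' ht (fun a => f a x)) := by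
  induction ht using Finset.Nonempty.cons_induction with
  | singleton a => simp only [Finset.sup'_singleton]; exact hf a (by simp)
  | cons a s h hs ih =>
    have e : (fun x => (Finset.cons a s h).sup' (Finset.cons_nonempty h) (fun b => f b x))
        = fun x => max (f a x) (s.sup' hs (fun b => f b x)) := by
      funext x; rw [Finset.sup'_cons (H := hs)]
    rw [e]
    exact IsLatticePoly.sup (hf a (by simp)) (ih fun b hb => hf b (by simp [hb]))

section MainR

variable {n : ℕ} {G : (Fin n → ℝ) → ℝ}

theorem LP.lemA (hc : Continuous G)
    (hinv : ∀ ψ : ℝ → ℝ, StrictMono ψ → Function.Bijective ψ →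
      ∀ x, G (fun i => ψ (x i)) = ψ (G x))
    (ψ : ℝ → ℝ) (hψc : Continuous ψ) (hψm : Monotone ψ) (x : Fin n → ℝ) :
    G (fun i => ψ (x i)) = ψ (G x) := by
  have key : ∀ t ∈ Set.Ioo (0:ℝ) 1,
      G (fun i => (1-t) * x i + t * ψ (x i)) = (1-t) * G x + t * ψ (G x) := by
    rintro t ⟨ht0, ht1⟩
    have hmono : StrictMono (fun s => (1-t) * s + t * ψ s) := by
      have h1 : StrictMono (fun s : ℝ => (1-t) * s) := fun u v huv => by
        dsimp only; exact (mul_lt_mul_iff_right₀ (by linarith)).mpr huv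
      have h2 : Monotone (fun s : ℝ => t * ψ s) := fun u v huv => by
        dsimp only; exact mul_le_mul_of_nonneg_left (hψm huv) (le_of_lt ht0)
      exact h1.add_monotone h2
    have hfc : Continuous (fun s => (1-t) * s + t * ψ s) :=
      ((continuous_const.mul continuous_id).add (continuous_const.mul hψc))
    have hbase : Tendsto (fun s : ℝ => (1-t) * s + t * ψ 0) atTop atTop :=
      tendsto_atTop_add_const_right _ _ ((tendsto_id.const_mul_atTop (by linarith)))
    have htop : Tendsto (fun s => (1-t) * s + t * ψ s) atTop atTop := by
      apply tendsto_atTop_mono' _ _ hbase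
      filter_upwards [eventually_ge_atTop (0:ℝ)] with s hs
      have := mul_le_mul_of_nonneg_left (hψm hs) (le_of_lt ht0)
      show (1-t) * s + t * ψ 0 ≤ (1-t) * s + t * ψ s
      linarith
    have hbase' : Tendsto (fun s : ℝ => (1-t) * s + t * ψ 0) atBot atBot :=
      tendsto_atBot_add_const_right _ _ ((tendsto_id.const_mul_atBot (by linarith)))
    have hbot : Tendsto (fun s => (1-t) * s + t * ψ s) atBot atBot := by
      apply tendsto_atBot_mono' _ _ hbase'
      filter_upwards [eventually_le_atBot (0:ℝ)] with s hs
      have := mul_le_mul_of_nonneg_left (hψm hs) (le_of_lt ht0)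
      show (1-t) * s + t * ψ s ≤ (1-t) * s + t * ψ 0
      linarith
    have hsurj := hfc.surjective htop hbot
    exact hinv _ hmono ⟨hmono.injective, hsurj⟩ x
  have hev : ∀ᶠ t in nhdsWithin (1:ℝ) (Set.Iio 1), t ∈ Set.Ioo (0:ℝ) 1 := by
    have h1 : ∀ᶠ t in nhdsWithin (1:ℝ) (Set.Iio 1), (0:ℝ) < t :=
      ((isOpen_Ioi.eventually_mem (by norm_num : (1:ℝ) ∈ Set.Ioi 0)).filter_mono
        nhdsWithin_le_nhds)
    have h2 : ∀ᶠ t in nhdsWithin (1:ℝ) (Set.Iio 1), t ∈ Set.Iio (1:ℝ) :=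
      eventually_mem_nhdsWithin
    filter_upwards [h1, h2] with t ha hb
    exact ⟨ha, hb⟩
  have l1 : Tendsto (fun t : ℝ => (1-t) * G x + t * ψ (G x)) (nhdsWithin 1 (Set.Iio 1))
      (nhds (ψ (G x))) := by
    have hcont : Continuous (fun t : ℝ => (1-t) * G x + t * ψ (G x)) := by
      exact ((continuous_const.sub continuous_id).mul continuous_const).add
        (continuous_id.mul continuous_const)
    have h2 : Tendsto (fun t : ℝ => (1-t) * G x + t * ψ (G x)) (nhds 1)
        (nhds (((1:ℝ)-1) * G x + 1 * ψ (G x))) := hcont.tendsto 1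
    rw [show ((1:ℝ)-1) * G x + 1 * ψ (G x) = ψ (G x) by ring] at h2
    exact h2.mono_left nhdsWithin_le_nhds
  have l2 : Tendsto (fun t : ℝ => G (fun i => (1-t) * x i + t * ψ (x i)))
      (nhdsWithin 1 (Set.Iio 1)) (nhds (G (fun i => ψ (x i)))) := by
    apply (hc.tendsto _).comp
    rw [tendsto_pi_nhds]
    intro i
    have hcont : Continuous (fun t : ℝ => (1-t) * x i + t * ψ (x i)) :=
      ((continuous_const.sub continuous_id).mul continuous_const).add
        (continuous_id.mul continuous_const)
    show Tendsto _ _ (nhds (ψ (x i)))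
    have h2 : Tendsto (fun t : ℝ => (1-t) * x i + t * ψ (x i)) (nhds 1)
        (nhds (((1:ℝ)-1) * x i + 1 * ψ (x i))) := hcont.tendsto 1
    rw [show ((1:ℝ)-1) * x i + 1 * ψ (x i) = ψ (x i) by ring] at h2
    exact h2.mono_left nhdsWithin_le_nhds
  have heq : (fun t : ℝ => G (fun i => (1-t) * x i + t * ψ (x i)))
      =ᶠ[nhdsWithin 1 (Set.Iio 1)] (fun t : ℝ => (1-t) * G x + t * ψ (G x)) := by
    filter_upwards [hev] with t ht
    exact key t ht
  exact tendsto_nhds_unique (l2.congr' heq) l1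

theorem LP.range (hA : ∀ ψ : ℝ → ℝ, Continuous ψ → Monotone ψ →
      ∀ x, G (fun i => ψ (x i)) = ψ (G x)) :
    ∀ x : Fin n → ℝ, ∃ i, G x = x i := by
  intro x
  by_contra hcon
  push_neg at hcon
  classical
  set d := G x with hd
  set B := (Finset.univ.image x).filter (fun v => v < d) with hB
  set C := (Finset.univ.image x).filter (fun v => d < v) with hC
  set u := if hB' : B.Nonempty then B.max' hB' else d - 1 with hu
  set w := if hC' : C.Nonempty then C.min' hC' else d + 1 with hw
  have hud : u < d := by
    rw [hu]; split
    · next hB' =>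
      have h := B.max'_mem hB'
      exact (Finset.mem_filter.mp h).2
    · linarith
  have hdw : d < w := by
    rw [hw]; split
    · next hC' =>
      have h := C.min'_mem hC'
      exact (Finset.mem_filter.mp h).2
    · linarith
  have hfix : ∀ i, x i ≤ u ∨ w ≤ x i := by
    intro i
    rcases lt_trichotomy (x i) d with h|h|h
    · left
      have hiB : x i ∈ B := by
        rw [hB]
        exact Finset.mem_filter.mpr ⟨Finset.mem_image_of_mem x (Finset.mem_univ i), h⟩
      rw [hu, dif_pos ⟨_, hiB⟩]
      exact B.le_max' _ hiB
    · exact absurd h.symm (hcon i)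
    · right
      have hiC : x i ∈ C := by
        rw [hC]
        exact Finset.mem_filter.mpr ⟨Finset.mem_image_of_mem x (Finset.mem_univ i), h⟩
      rw [hw, dif_pos ⟨_, hiC⟩]
      exact C.min'_le _ hiC
  set β := (w - (u+d)/2)/(w-d) with hβ
  have hwd : (0:ℝ) < w - d := by linarith
  have hβ1 : 1 ≤ β := by
    rw [hβ, le_div_iff₀ hwd]
    linarith
  have hβ0 : 0 ≤ β := by linarith
  set ψ : ℝ → ℝ := fun s => min s (max ((s+u)/2) (w + β*(s-w))) with hψ
  have hψm : Monotone ψ := by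
    apply monotone_id.min
    apply Monotone.max
    · intro p q h; dsimp only; linarith
    · intro p q h; dsimp only
      have := mul_le_mul_of_nonneg_left (sub_le_sub_right h w) hβ0
      linarith
  have hψc : Continuous ψ := by
    apply continuous_id.min
    apply Continuous.max
    · exact (continuous_id.add continuous_const).div_const 2
    · exact continuous_const.add (continuous_const.mul (continuous_id.sub continuous_const))
  have hfixlo : ∀ v, v ≤ u → ψ v = v := by
    intro v hv
    rw [hψ]
    exact min_eq_left (le_trans (by linarith) (le_max_left _ _))
  have hfixhi : ∀ v, w ≤ v → ψ v = v := by
    intro v hv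
    rw [hψ]
    refine min_eq_left (le_trans ?_ (le_max_right _ _))
    have := mul_le_mul_of_nonneg_right hβ1 (by linarith : (0:ℝ) ≤ v - w)
    linarith
  have hψd : ψ d = (u+d)/2 := by
    rw [hψ]
    have h2 : w + β*(d-w) = (u+d)/2 := by
      rw [hβ]
      field_simp
      ring
    dsimp only
    rw [h2, show (d+u)/2 = (u+d)/2 by ring, max_self]
    exact min_eq_right (by linarith)
  have hψx : (fun i => ψ (x i)) = x := by
    funext i
    rcases hfix i with h|h
    · exact hfixlo _ h
    · exact hfixhi _ h
  have := hA ψ hψc hψm x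
  rw [hψx, ← hd, hψd] at this
  linarith

/-- characteristic vector of a subset -/
noncomputable def LP.eS {n : ℕ} (S : Finset (Fin n)) : Fin n → ℝ :=
  fun i => if i ∈ S then 1 else 0

theorem LP.const (hA : ∀ ψ : ℝ → ℝ, Continuous ψ → Monotone ψ →
      ∀ x, G (fun i => ψ (x i)) = ψ (G x)) (c : ℝ) (x : Fin n → ℝ) :
    G (fun _ => c) = c := by
  have := hA (fun _ => c) continuous_const monotone_const x
  exact this

theorem LP.twoval (hA : ∀ ψ : ℝ → ℝ, Continuous ψ → Monotone ψ →
      ∀ x, G (fun i => ψ (x i)) = ψ (G x)) {u c : ℝ} (huc : u ≤ c) (T : Finset (Fin n)) :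
    G (fun i => if i ∈ T then c else u) = u + (c - u) * G (LP.eS T) := by
  have hm : Monotone (fun s : ℝ => u + (c - u) * s) := by
    intro p q h; dsimp only
    have := mul_le_mul_of_nonneg_left h (by linarith : (0:ℝ) ≤ c - u)
    linarith
  have hcc : Continuous (fun s : ℝ => u + (c - u) * s) :=
    continuous_const.add (continuous_const.mul continuous_id)
  have key := hA _ hcc hm (LP.eS T)
  have he : (fun i => u + (c - u) * (LP.eS T i)) = (fun i => if i ∈ T then c else u) := by
    funext i
    unfold LP.eS
    by_cases h : i ∈ T <;> simp [h]
  rw [← he]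
  exact key

theorem LP.upward (hA : ∀ ψ : ℝ → ℝ, Continuous ψ → Monotone ψ →
      ∀ x, G (fun i => ψ (x i)) = ψ (G x)) {S S' : Finset (Fin n)} (hss : S ⊆ S')
    (hS : G (LP.eS S) = 1) : G (LP.eS S') = 1 := by
  classical
  set e3 : Fin n → ℝ := fun i => if i ∈ S then 1 else if i ∈ S' then 1/2 else 0 with he3
  have hmb : Monotone (fun s : ℝ => max (2*s - 1) 0) := by
    intro p q h
    exact max_le_max (by linarith) le_rfl
  have hcb : Continuous (fun s : ℝ => max (2*s - 1) 0) :=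
    Continuous.max ((continuous_const.mul continuous_id).sub continuous_const) continuous_const
  have hma : Monotone (fun s : ℝ => min (2*s) 1) := by
    intro p q h
    exact min_le_min (by linarith) le_rfl
  have hca : Continuous (fun s : ℝ => min (2*s) 1) :=
    Continuous.min (continuous_const.mul continuous_id) continuous_const
  have hb : (fun i => max (2 * e3 i - 1) 0) = LP.eS S := by
    funext i
    rw [he3]; unfold LP.eS
    by_cases h1 : i ∈ S
    · simp only [h1, if_true]; norm_num
    · by_cases h2 : i ∈ S' <;> simp only [h1, h2, if_true, if_false] <;> norm_num
  have ha : (fun i => min (2 * e3 i) 1) = LP.eS S' := by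
    funext i
    rw [he3]; unfold LP.eS
    by_cases h1 : i ∈ S
    · simp only [h1, hss h1, if_true]; norm_num
    · by_cases h2 : i ∈ S' <;> simp only [h1, h2, if_true, if_false] <;> norm_num
  have h1 : G (LP.eS S) = max (2 * G e3 - 1) 0 := by
    rw [← hb]; exact hA _ hcb hmb e3
  rw [hS] at h1
  have hd1 : G e3 = 1 := by
    rcases le_or_gt (2 * G e3 - 1) 0 with h|h
    · rw [max_eq_right h] at h1; norm_num at h1
    · rw [max_eq_left h.le] at h1; linarith
  have h2 : G (LP.eS S') = min (2 * G e3) 1 := by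
    rw [← ha]; exact hA _ hca hma e3
  rw [hd1] at h2
  rw [h2]; norm_num

theorem LP.maxu (hA : ∀ ψ : ℝ → ℝ, Continuous ψ → Monotone ψ →
      ∀ x, G (fun i => ψ (x i)) = ψ (G x)) (u : ℝ) (y : Fin n → ℝ) :
    G (fun i => max (y i) u) = max (G y) u :=
  hA _ (continuous_id.max continuous_const) (monotone_id.max monotone_const) y

theorem LP.minc (hA : ∀ ψ : ℝ → ℝ, Continuous ψ → Monotone ψ →
      ∀ x, G (fun i => ψ (x i)) = ψ (G x)) (c : ℝ) (y : Fin n → ℝ) :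
    G (fun i => min (y i) c) = min (G y) c :=
  hA _ (continuous_id.min continuous_const) (monotone_id.min monotone_const) y

theorem LP.memS (hA : ∀ ψ : ℝ → ℝ, Continuous ψ → Monotone ψ →
      ∀ x, G (fun i => ψ (x i)) = ψ (G x)) (hR : ∀ x : Fin n → ℝ, ∃ i, G x = x i)
    (x : Fin n → ℝ) (T : Finset (Fin n)) (hT : ∀ i, i ∈ T ↔ G x ≤ x i) :
    G (LP.eS T) = 1 := by
  classical
  set c := G x with hc
  by_cases hall : ∀ i, c ≤ x i
  · have hTu : T = Finset.univ := Finset.eq_univ_iff_forall.mpr (fun i => (hT i).mpr (hall i))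
    have he : LP.eS T = fun _ => (1:ℝ) := by
      funext i; unfold LP.eS; rw [hTu]; simp
    rw [he]
    exact LP.const hA 1 x
  · push_neg at hall
    set U := (Finset.univ.filter (fun i => x i < c)).image x with hU
    have hUne : U.Nonempty := by
      obtain ⟨j, hj⟩ := hall
      exact ⟨x j, Finset.mem_image_of_mem x (Finset.mem_filter.mpr ⟨Finset.mem_univ _, hj⟩)⟩
    set u := U.max' hUne with hu
    have huc : u < c := by
      have hmem := U.max'_mem hUne
      obtain ⟨j, hj, hxj⟩ := Finset.mem_image.mp hmem
      rw [hu, ← hxj]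
      exact (Finset.mem_filter.mp hj).2
    have hle : ∀ i, x i < c → x i ≤ u := by
      intro i hi
      exact U.le_max' _ (Finset.mem_image_of_mem x
        (Finset.mem_filter.mpr ⟨Finset.mem_univ _, hi⟩))
    have hGy : G (fun i => min (x i) c) = min (G x) c := LP.minc hA c x
    have hGyc : G (fun i => min (x i) c) = c := by rw [hGy, ← hc, min_self]
    have hz : (fun i => max (min (x i) c) u) = (fun i => if i ∈ T then c else u) := by
      funext i
      by_cases h : i ∈ T
      · rw [if_pos h]
        have hxi := (hT i).mp h
        rw [min_eq_right hxi, max_eq_left (le_of_lt huc)]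
      · rw [if_neg h]
        have hxi : x i < c := lt_of_not_ge (fun hcon => h ((hT i).mpr hcon))
        rw [min_eq_left (le_of_lt hxi), max_eq_right (hle i hxi)]
    have hGz : G (fun i => if i ∈ T then c else u) = max c u := by
      rw [← hz]
      have h2 := LP.maxu hA u (fun i => min (x i) c)
      rw [hGyc] at h2
      exact h2
    have htv := LP.twoval hA (le_of_lt huc) T
    rw [hGz, max_eq_left (le_of_lt huc)] at htv
    obtain ⟨j, hj⟩ := hR (LP.eS T)
    by_cases hjT : j ∈ T
    · rw [hj]; unfold LP.eS; rw [if_pos hjT]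
    · rw [hj] at htv
      unfold LP.eS at htv
      rw [if_neg hjT] at htv
      simp at htv
      exfalso
      linarith

theorem LP.lower (hA : ∀ ψ : ℝ → ℝ, Continuous ψ → Monotone ψ →
      ∀ x, G (fun i => ψ (x i)) = ψ (G x))
    (x : Fin n → ℝ) (S : Finset (Fin n)) (hS : S.Nonempty) (hGS : G (LP.eS S) = 1) :
    S.inf' hS x ≤ G x := by
  classical
  set c := S.inf' hS x with hc
  have hGy : G (fun i => min (x i) c) = min (G x) c := LP.minc hA c x
  by_cases hall : ∀ i, c ≤ x i
  · have hyc : (fun i => min (x i) c) = fun _ => c := funext fun i => min_eq_right (hall i)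
    rw [hyc, LP.const hA c x] at hGy
    exact min_eq_right_iff.mp hGy.symm
  · push_neg at hall
    set S' := Finset.univ.filter (fun i => c ≤ x i) with hS'def
    have hsub : S ⊆ S' := by
      intro i hi
      exact Finset.mem_filter.mpr ⟨Finset.mem_univ _, Finset.inf'_le x hi⟩
    have hGS' : G (LP.eS S') = 1 := LP.upward hA hsub hGS
    set U := (Finset.univ.filter (fun i => x i < c)).image x with hU
    have hUne : U.Nonempty := by
      obtain ⟨j, hj⟩ := hall
      exact ⟨x j, Finset.mem_image_of_mem x (Finset.mem_filter.mpr ⟨Finset.mem_univ _, hj⟩)⟩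
    set u := U.max' hUne with hu
    have huc : u < c := by
      have hmem := U.max'_mem hUne
      obtain ⟨j, hj, hxj⟩ := Finset.mem_image.mp hmem
      rw [hu, ← hxj]
      exact (Finset.mem_filter.mp hj).2
    have hle : ∀ i, x i < c → x i ≤ u := by
      intro i hi
      exact U.le_max' _ (Finset.mem_image_of_mem x
        (Finset.mem_filter.mpr ⟨Finset.mem_univ _, hi⟩))
    have hz : (fun i => max (min (x i) c) u) = (fun i => if i ∈ S' then c else u) := by
      funext i
      by_cases h : i ∈ S'
      · rw [if_pos h]
        have hxi : c ≤ x i := (Finset.mem_filter.mp h).2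
        rw [min_eq_right hxi, max_eq_left (le_of_lt huc)]
      · rw [if_neg h]
        have hxi : x i < c := by
          by_contra hcon
          exact h (Finset.mem_filter.mpr ⟨Finset.mem_univ _, le_of_not_gt hcon⟩)
        rw [min_eq_left (le_of_lt hxi), max_eq_right (hle i hxi)]
    have hGz : G (fun i => if i ∈ S' then c else u) = max (min (G x) c) u := by
      rw [← hz]
      have h2 := LP.maxu hA u (fun i => min (x i) c)
      rw [hGy] at h2
      exact h2
    have htv := LP.twoval hA (le_of_lt huc) S'
    rw [hGz, hGS'] at htv
    have hmc : max (min (G x) c) u = c := by rw [htv]; ring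
    rcases max_choice (min (G x) c) u with h|h
    · rw [h] at hmc
      exact min_eq_right_iff.mp hmc
    · rw [h] at hmc
      exact absurd hmc (ne_of_lt huc)

theorem LP.mainR {n : ℕ} (G : (Fin n → ℝ) → ℝ) (hc : Continuous G)
    (hinv : ∀ ψ : ℝ → ℝ, StrictMono ψ → Function.Bijective ψ →
      ∀ x, G (fun i => ψ (x i)) = ψ (G x)) : IsLatticePoly n G := by
  classical
  have hA : ∀ ψ : ℝ → ℝ, Continuous ψ → Monotone ψ →
      ∀ x, G (fun i => ψ (x i)) = ψ (G x) := LP.lemA hc hinv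
  have hR : ∀ x : Fin n → ℝ, ∃ i, G x = x i := LP.range hA
  rcases Nat.eq_zero_or_pos n with hn | hn
  · subst hn
    obtain ⟨i, -⟩ := hR (fun _ => 0)
    exact i.elim0
  haveI : Nonempty (Fin n) := Fin.pos_iff_nonempty.mp hn
  set 𝒮 : Finset (Finset (Fin n)) :=
    Finset.univ.filter (fun S : Finset (Fin n) => G (LP.eS S) = 1) with h𝒮
  have huniv : Finset.univ ∈ 𝒮 := by
    refine Finset.mem_filter.mpr ⟨Finset.mem_univ _, ?_⟩
    have he : LP.eS (Finset.univ : Finset (Fin n)) = fun _ => (1:ℝ) := by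
      funext i; unfold LP.eS; simp
    rw [he]
    exact LP.const hA 1 (fun _ => 0)
  have h𝒮ne : 𝒮.Nonempty := ⟨_, huniv⟩
  have hSne : ∀ S ∈ 𝒮, S.Nonempty := by
    intro S hS
    rw [Finset.nonempty_iff_ne_empty]
    rintro rfl
    have hGS := (Finset.mem_filter.mp hS).2
    have he : LP.eS (∅ : Finset (Fin n)) = fun _ => (0:ℝ) := by
      funext i; unfold LP.eS; simp
    rw [he, LP.const hA 0 (fun _ => 0)] at hGS
    norm_num at hGS
  have hane : 𝒮.attach.Nonempty := Finset.attach_nonempty_iff.mpr h𝒮ne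
  have hGP : ∀ x : Fin n → ℝ,
      G x = 𝒮.attach.sup' hane (fun S => S.1.inf' (hSne S.1 S.2) x) := by
    intro x
    apply le_antisymm
    · set T := Finset.univ.filter (fun i => G x ≤ x i) with hTdef
      have hT : ∀ i, i ∈ T ↔ G x ≤ x i := by
        intro i
        constructor
        · intro h; exact (Finset.mem_filter.mp h).2
        · intro h; exact Finset.mem_filter.mpr ⟨Finset.mem_univ _, h⟩
      have hTS : T ∈ 𝒮 :=
        Finset.mem_filter.mpr ⟨Finset.mem_univ _, LP.memS hA hR x T hT⟩
      refine le_trans ?_ (Finset.le_sup' _ (Finset.mem_attach _ ⟨T, hTS⟩))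
      apply Finset.le_inf'
      intro i hi
      exact (hT i).mp hi
    · apply Finset.sup'_le
      rintro ⟨S, hS⟩ -
      exact LP.lower hA x S (hSne S hS) ((Finset.mem_filter.mp hS).2)
  have hP : IsLatticePoly n
      (fun x : Fin n → ℝ => 𝒮.attach.sup' hane (fun S => S.1.inf' (hSne S.1 S.2) x)) := by
    apply LP.latticePoly_sup' hane (fun S (x : Fin n → ℝ) => S.1.inf' (hSne S.1 S.2) x)
    intro S _
    exact LP.latticePoly_inf' (hSne S.1 S.2)
  have hGeq : G = fun x : Fin n → ℝ =>
      𝒮.attach.sup' hane (fun S => S.1.inf' (hSne S.1 S.2) x) :=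
    funext hGP
  rw [hGeq]
  exact hP

end MainR

theorem LP.transfer {α β : Type*} [LinearOrder α] [LinearOrder β] (e : α ≃o β) {n : ℕ}
    {G : (Fin n → β) → β} (hG : IsLatticePoly n G) :
    IsLatticePoly n (fun x : Fin n → α => e.symm (G (fun i => e (x i)))) := by
  induction hG with
  | proj k =>
    simp only [OrderIso.symm_apply_apply]
    exact IsLatticePoly.proj k
  | @inf p q hp hq ihp ihq =>
    have h : (fun x : Fin n → α =>
        e.symm (min (p (fun i => e (x i))) (q (fun i => e (x i)))))
        = fun x : Fin n → α =>
          min (e.symm (p (fun i => e (x i)))) (e.symm (q (fun i => e (x i)))) :=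
      funext fun x => e.symm.monotone.map_min
    rw [h]
    exact IsLatticePoly.inf ihp ihq
  | @sup p q hp hq ihp ihq =>
    have h : (fun x : Fin n → α =>
        e.symm (max (p (fun i => e (x i))) (q (fun i => e (x i)))))
        = fun x : Fin n → α =>
          max (e.symm (p (fun i => e (x i)))) (e.symm (q (fun i => e (x i)))) :=
      funext fun x => e.symm.monotone.map_max
    rw [h]
    exact IsLatticePoly.sup ihp ihq

/-- On an open real interval `E`, the continuous order invariant functions
`F : Eⁿ → E` are exactly the lattice polynomial functions. -/
theorem continuous_orderInvariant_iff_latticePoly (n : ℕ) (E : Set ℝ)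
    (hne : E.Nonempty) (hopen : IsOpen E) (hE : E.OrdConnected)
    (F : (Fin n → E) → E) :
    (Continuous F ∧
      ∀ φ : E → E, StrictMono φ → Function.Bijective φ →
        ∀ x : Fin n → E, F (fun i => φ (x i)) = φ (F x)) ↔
    IsLatticePoly n F := by
  haveI := hE
  constructor
  · rintro ⟨hFc, hFinv⟩
    obtain ⟨e⟩ := LP.existsIso E hne hopen hE
    set G : (Fin n → ℝ) → ℝ := fun y => e (F (fun i => e.symm (y i))) with hG
    have hGc : Continuous G := by
      apply e.continuous.comp
      apply hFc.comp
      exact continuous_pi fun i => e.symm.continuous.comp (continuous_apply i)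
    have hGinv : ∀ ψ : ℝ → ℝ, StrictMono ψ → Function.Bijective ψ →
        ∀ y, G (fun i => ψ (y i)) = ψ (G y) := by
      intro ψ hψm hψb y
      set φ : E → E := fun s => e.symm (ψ (e s)) with hφ
      have hφm : StrictMono φ := fun s t h => e.symm.strictMono (hψm (e.strictMono h))
      have hφb : Function.Bijective φ := by
        constructor
        · exact hφm.injective
        · intro t
          obtain ⟨r, hr⟩ := hψb.2 (e t)
          exact ⟨e.symm r, by rw [hφ]; simp [hr]⟩
      have key := hFinv φ hφm hφb (fun i => e.symm (y i))
      have h1 : (fun i => φ ((fun j => e.symm (y j)) i)) = fun i => e.symm (ψ (y i)) := by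
        funext i; rw [hφ]; simp
      rw [h1] at key
      show e (F (fun i => e.symm (ψ (y i)))) = ψ (e (F (fun i => e.symm (y i))))
      rw [key, hφ]
      simp
    have hGlat := LP.mainR G hGc hGinv
    have htr := LP.transfer e hGlat
    have hFeq : (fun x : Fin n → E => e.symm (G (fun i => e (x i)))) = F := by
      funext x
      show e.symm (e (F (fun j => e.symm (e (x j))))) = F x
      simp
    rw [← hFeq]
    exact htr
  · intro hF
    induction hF with
    | proj k => exact ⟨continuous_apply k, fun φ _ _ x => rfl⟩
    | @inf p q hp hq ihp ihq =>
      refine ⟨ihp.1.min ihq.1, ?_⟩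
      intro φ hm hb x
      show min (p (fun i => φ (x i))) (q (fun i => φ (x i))) = φ (min (p x) (q x))
      rw [ihp.2 φ hm hb x, ihq.2 φ hm hb x, ← hm.monotone.map_min]
    | @sup p q hp hq ihp ihq =>
      refine ⟨ihp.1.max ihq.1, ?_⟩
      intro φ hm hb x
      show max (p (fun i => φ (x i))) (q (fun i => φ (x i))) = φ (max (p x) (q x))
      rw [ihp.2 φ hm hb x, ihq.2 φ hm hb x, ← hm.monotone.map_max]
end

section
/- Let E be an open real interval and let F : Eⁿ → E be an order invariant function. Then for every x ∈ Eⁿ, F(x) ∈ {x_1,…,x_n}; moreover, on each minimal order invariant subset I of Eⁿ (i.e., each orbit of Eⁿ under the diagonal action of the group of increasing bijections of E), F coincides with a projection: there exists k_I ∈ [n] with F(x) = x_{k_I} for all x ∈ I. -/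
/-- The bump map: identity outside `(t-δ, t+δ)`, pushes points up inside. -/
noncomputable def oioBump (t δ s : ℝ) : ℝ := s + max 0 (δ - |s - t|) / 2

lemma oioBump_strictMono (t δ : ℝ) : StrictMono (oioBump t δ) := by
  intro a b hab
  have h1 : |max 0 (δ - |b - t|) - max 0 (δ - |a - t|)| ≤ |a - b| := by
    calc |max 0 (δ - |b - t|) - max 0 (δ - |a - t|)|
        = |max (δ - |b - t|) 0 - max (δ - |a - t|) 0| := by rw [max_comm (δ - |b - t|) 0, max_comm (δ - |a - t|) 0]
      _ ≤ |(δ - |b - t|) - (δ - |a - t|)| := abs_max_sub_max_le_abs _ _ _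
      _ = abs (abs (a - t) - abs (b - t)) := by ring_nf
      _ ≤ abs ((a - t) - (b - t)) := abs_abs_sub_abs_le_abs_sub _ _
      _ = |a - b| := by ring_nf
  have h2 : |a - b| = b - a := by rw [abs_sub_comm]; exact abs_of_pos (by linarith)
  rw [h2] at h1
  have := abs_le.1 h1
  unfold oioBump
  linarith [this.1, this.2]

lemma oioBump_eq_self {t δ s : ℝ} (h : δ ≤ |s - t|) : oioBump t δ s = s := by
  unfold oioBump
  rw [max_eq_left (by linarith)]
  ring

lemma oioBump_mem_Ioo {t δ s : ℝ} (hδ : 0 < δ) (hs : s ∈ Set.Ioo (t - δ) (t + δ)) :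
    oioBump t δ s ∈ Set.Ioo (t - δ) (t + δ) := by
  obtain ⟨h1, h2⟩ := hs
  constructor
  · have : 0 ≤ max 0 (δ - |s - t|) / 2 := by positivity
    unfold oioBump; linarith
  · unfold oioBump
    rcases le_total (δ - |s - t|) 0 with h | h
    · rw [max_eq_left h]; linarith
    · rw [max_eq_right h]
      rcases abs_cases (s - t) with ⟨he, _⟩ | ⟨he, _⟩ <;> rw [he] at h ⊢ <;> linarith

lemma oioBump_surjective {t δ : ℝ} (hδ : 0 < δ) : Function.Surjective (oioBump t δ) := by
  intro y
  rcases le_or_gt y (t - δ) with h | h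
  · exact ⟨y, oioBump_eq_self (by rw [abs_sub_comm]; rw [abs_of_nonneg (by linarith)]; linarith)⟩
  rcases le_or_gt (t + δ) y with h' | h'
  · exact ⟨y, oioBump_eq_self (by rw [abs_of_nonneg (by linarith)]; linarith)⟩
  · have hcont : ContinuousOn (oioBump t δ) (Set.Icc (t - δ) (t + δ)) := by
      apply Continuous.continuousOn
      unfold oioBump
      fun_prop
    have ha : oioBump t δ (t - δ) = t - δ :=
      oioBump_eq_self (by rw [abs_sub_comm, abs_of_nonneg (by linarith)]; linarith)
    have hb : oioBump t δ (t + δ) = t + δ :=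
      oioBump_eq_self (by rw [abs_of_nonneg (by linarith)]; linarith)
    have hsub := intermediate_value_Icc (by linarith : t - δ ≤ t + δ) hcont
    rw [ha, hb] at hsub
    obtain ⟨s, _, hs⟩ := hsub ⟨le_of_lt h, le_of_lt h'⟩
    exact ⟨s, hs⟩

lemma oioBump_ne {t δ : ℝ} (hδ : 0 < δ) : oioBump t δ t ≠ t := by
  unfold oioBump
  rw [sub_self, abs_zero, sub_zero, max_eq_right (le_of_lt hδ)]
  intro h
  linarith [h]

/-- On an open real interval `E`, every order invariant function `F : Eⁿ → E` is
internal to its arguments, and on each orbit of `Eⁿ` under the diagonal action of the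
group of increasing bijections of `E` it coincides with a projection. -/
theorem orderInvariant_projection_on_orbits (n : ℕ) (E : Set ℝ)
    (hne : E.Nonempty) (hopen : IsOpen E) (hE : E.OrdConnected)
    (F : (Fin n → E) → E)
    (hinv : ∀ φ : E → E, StrictMono φ → Function.Bijective φ →
      ∀ x : Fin n → E, F (fun i => φ (x i)) = φ (F x)) :
    (∀ x : Fin n → E, ∃ i, F x = x i) ∧
    (∀ x : Fin n → E, ∃ k : Fin n, ∀ y : Fin n → E,
      (∃ φ : E → E, StrictMono φ ∧ Function.Bijective φ ∧ y = fun i => φ (x i)) →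
      F y = y k) := by
  have main : ∀ x : Fin n → E, ∃ i, F x = x i := by
    intro x
    by_contra hcon
    push_neg at hcon
    set t : ℝ := (F x : ℝ) with ht
    have htE : t ∈ E := (F x).2
    obtain ⟨ε, hε, hball⟩ := Metric.isOpen_iff.1 hopen t htE
    have hxi : ∀ i, 0 < |(x i : ℝ) - t| := by
      intro i
      rw [abs_pos, sub_ne_zero]
      intro h
      exact hcon i (Subtype.ext h).symm
    -- pick δ > 0 with δ ≤ ε and δ ≤ |x i - t| for all i
    have hδex : ∃ δ : ℝ, 0 < δ ∧ δ ≤ ε ∧ ∀ i, δ ≤ |(x i : ℝ) - t| := by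
      rcases isEmpty_or_nonempty (Fin n) with h | h
      · exact ⟨ε, hε, le_refl ε, fun i => isEmptyElim i⟩
      · obtain ⟨j, _, hj⟩ := Finset.exists_min_image Finset.univ
          (fun i => |(x i : ℝ) - t|) ⟨Classical.arbitrary (Fin n), Finset.mem_univ _⟩
        refine ⟨min ε (|(x j : ℝ) - t|), lt_min hε (hxi j), min_le_left _ _, fun i => ?_⟩
        exact le_trans (min_le_right _ _) (hj i (Finset.mem_univ i))
    obtain ⟨δ, hδ, hδε, hδx⟩ := hδex
    have hIoo : Set.Ioo (t - δ) (t + δ) ⊆ E := by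
      intro s hs
      apply hball
      rw [Metric.mem_ball, Real.dist_eq]
      rcases abs_cases (s - t) with ⟨he, _⟩ | ⟨he, _⟩ <;> rw [he] <;>
        cases hs <;> linarith
    have hmem : ∀ e : E, oioBump t δ (e : ℝ) ∈ E := by
      intro e
      rcases le_or_gt δ (|(e : ℝ) - t|) with h | h
      · rw [oioBump_eq_self h]; exact e.2
      · apply hIoo
        apply oioBump_mem_Ioo hδ
        rcases abs_cases ((e : ℝ) - t) with ⟨he, _⟩ | ⟨he, _⟩ <;> rw [he] at h <;>
          exact ⟨by linarith, by linarith⟩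
    set φ : E → E := fun e => ⟨oioBump t δ (e : ℝ), hmem e⟩ with hφ
    have hφmono : StrictMono φ := fun a b hab =>
      Subtype.mk_lt_mk.2 (oioBump_strictMono t δ (Subtype.coe_lt_coe.2 hab))
    have hφbij : Function.Bijective φ := by
      constructor
      · exact hφmono.injective
      · intro e
        obtain ⟨s, hs⟩ := oioBump_surjective hδ (e : ℝ)
        have hsE : s ∈ E := by
          rcases le_or_gt δ (|s - t|) with h | h
          · rw [oioBump_eq_self h] at hs; rw [hs]; exact e.2
          · apply hIoo
            rcases abs_cases (s - t) with ⟨he, _⟩ | ⟨he, _⟩ <;> rw [he] at h <;>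
              exact ⟨by linarith, by linarith⟩
        exact ⟨⟨s, hsE⟩, Subtype.ext hs⟩
    have hfix : (fun i => φ (x i)) = x := by
      funext i
      exact Subtype.ext (oioBump_eq_self (hδx i))
    have := hinv φ hφmono hφbij x
    rw [hfix] at this
    have : (F x : ℝ) = oioBump t δ (F x : ℝ) := congrArg Subtype.val this
    exact oioBump_ne hδ (by rw [← ht] at this; exact this.symm)
  refine ⟨main, fun x => ?_⟩
  obtain ⟨k, hk⟩ := main x
  refine ⟨k, fun y ⟨φ, hmono, hbij, hy⟩ => ?_⟩
  rw [hy]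
  have := hinv φ hmono hbij x
  rw [this, hk]
end

section
/- Let E be an open real interval and F : Eⁿ → ℝ. If F is idempotent (F(x,…,x) = x for all x ∈ E) and comparison meaningful on a single ordinal scale, and ran(F) ⊆ E, then F is order invariant: F(φ(x₁),…,φ(xₙ)) = φ(F(x)) for all x ∈ Eⁿ and all increasing bijections φ of E. Conversely, every order invariant function F : Eⁿ → E is comparison meaningful on a single ordinal scale. -/
/-- On an open real interval `E`: an idempotent function `F : Eⁿ → ℝ` that is comparison
meaningful on a single ordinal scale and whose range lies in `E` is order invariant;
conversely, every order invariant function `G : Eⁿ → E` is comparison meaningful on a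
single ordinal scale. -/
theorem idempotent_comparisonMeaningful_iff_orderInvariant (n : ℕ) (E : Set ℝ)
    (hne : E.Nonempty) (hopen : IsOpen E) (hE : E.OrdConnected) :
    (∀ F : (Fin n → E) → ℝ,
      (∀ e : E, F (fun _ => e) = (e : ℝ)) →
      (∀ φ : E → E, StrictMono φ → Function.Bijective φ →
        ∀ x x' : Fin n → E,
          (F x ≤ F x' ↔ F (fun i => φ (x i)) ≤ F (fun i => φ (x' i)))) →
      ∀ hran : ∀ x : Fin n → E, F x ∈ E,
        ∀ φ : E → E, StrictMono φ → Function.Bijective φ →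
          ∀ x : Fin n → E, F (fun i => φ (x i)) = (φ ⟨F x, hran x⟩ : ℝ)) ∧
    (∀ G : (Fin n → E) → E,
      (∀ φ : E → E, StrictMono φ → Function.Bijective φ →
        ∀ x : Fin n → E, G (fun i => φ (x i)) = φ (G x)) →
      ∀ φ : E → E, StrictMono φ → Function.Bijective φ →
        ∀ x x' : Fin n → E,
          ((G x : ℝ) ≤ (G x' : ℝ) ↔
            (G (fun i => φ (x i)) : ℝ) ≤ (G (fun i => φ (x' i)) : ℝ))) := by
  constructor
  · intro F hid hcm hran φ hmono hbij x
    set e : E := ⟨F x, hran x⟩ with he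
    have h1 : F x ≤ F (fun _ => e) := by rw [hid e]
    have h2 : F (fun _ => e) ≤ F x := by rw [hid e]
    have h1' := (hcm φ hmono hbij x (fun _ => e)).mp h1
    have h2' := (hcm φ hmono hbij (fun _ => e) x).mp h2
    have hφe : F (fun _ => φ e) = (φ e : ℝ) := hid (φ e)
    simp only [hφe] at h1' h2'
    exact le_antisymm h1' h2'
  · intro G hoi φ hmono hbij x x'
    rw [hoi φ hmono hbij x, hoi φ hmono hbij x']
    exact ⟨fun h => hmono.le_iff_le.mpr h, fun h => hmono.le_iff_le.mp h⟩
end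

section
/- Let E be an open real interval, n ≥ 2, and F : Eⁿ → ℝ a function that is symmetric and comparison meaningful on independent ordinal scales. Then F is constant. In particular, no symmetric idempotent function on Eⁿ (n ≥ 2) is comparison meaningful on independent ordinal scales. -/
open Set

noncomputable def pl (p q p' q' t : ℝ) : ℝ :=
  if t ≤ p then t + (p' - p)
  else if t ≤ q then p' + (q' - p') / (q - p) * (t - p)
  else t + (q' - q)

lemma pl_val_low {p q p' q' t : ℝ} (h1 : t ≤ p) : pl p q p' q' t = t + (p' - p) := by
  unfold pl; rw [if_pos h1]

lemma pl_val_mid {p q p' q' t : ℝ} (h1 : p < t) (h2 : t ≤ q) :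
    pl p q p' q' t = p' + (q' - p') / (q - p) * (t - p) := by
  unfold pl; rw [if_neg (not_le.mpr h1), if_pos h2]

lemma pl_val_high {p q p' q' t : ℝ} (h : p < q) (h2 : q < t) : pl p q p' q' t = t + (q' - q) := by
  unfold pl; rw [if_neg (not_le.mpr (h.trans h2)), if_neg (not_le.mpr h2)]

lemma pl_strictMono {p q p' q' : ℝ} (h : p < q) (h' : p' < q') : StrictMono (pl p q p' q') := by
  have hc : 0 < (q' - p') / (q - p) := div_pos (by linarith) (by linarith)
  have hcq : (q' - p') / (q - p) * (q - p) = q' - p' := div_mul_cancel₀ _ (by linarith)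
  intro s t hst
  rcases le_or_gt s p with hs1 | hs1
  · rw [pl_val_low hs1]
    rcases le_or_gt t p with ht1 | ht1
    · rw [pl_val_low ht1]; linarith
    · rcases le_or_gt t q with ht2 | ht2
      · rw [pl_val_mid ht1 ht2]; nlinarith [mul_pos hc (sub_pos.mpr ht1)]
      · rw [pl_val_high h ht2]; linarith
  · rcases le_or_gt s q with hs2 | hs2
    · rw [pl_val_mid hs1 hs2]
      rcases le_or_gt t q with ht2 | ht2
      · rw [pl_val_mid (lt_trans hs1 hst) ht2]
        nlinarith [mul_lt_mul_of_pos_left (sub_lt_sub_right hst p) hc]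
      · rw [pl_val_high h ht2]
        nlinarith [mul_le_mul_of_nonneg_left (sub_le_sub_right hs2 p) hc.le]
    · rw [pl_val_high h hs2, pl_val_high h (lt_trans hs2 hst)]; linarith

lemma pl_left_inv {p q p' q' : ℝ} (h : p < q) (h' : p' < q') (t : ℝ) :
    pl p' q' p q (pl p q p' q' t) = t := by
  have hqp : (0:ℝ) < q - p := by linarith
  have hqp' : (0:ℝ) < q' - p' := by linarith
  have hc : 0 < (q' - p') / (q - p) := div_pos hqp' hqp
  rcases le_or_gt t p with h1 | h1
  · rw [pl_val_low h1, pl_val_low (by linarith)]; ring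
  · rcases le_or_gt t q with h2 | h2
    · have hv1 : p' < p' + (q' - p') / (q - p) * (t - p) := by
        nlinarith [mul_pos hc (sub_pos.mpr h1)]
      have hv2 : p' + (q' - p') / (q - p) * (t - p) ≤ q' := by
        nlinarith [mul_le_mul_of_nonneg_left (sub_le_sub_right h2 p) hc.le,
          div_mul_cancel₀ (q' - p') hqp.ne']
      rw [pl_val_mid h1 h2, pl_val_mid hv1 hv2]
      field_simp
      ring
    · rw [pl_val_high h h2, pl_val_high h' (by linarith)]; ring

lemma pl_bijective {p q p' q' : ℝ} (h : p < q) (h' : p' < q') :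
    Function.Bijective (pl p q p' q') :=
  ⟨(pl_strictMono h h').injective, fun t => ⟨pl p' q' p q t, pl_left_inv h' h t⟩⟩

lemma pl_apply_left {p q p' q' : ℝ} : pl p q p' q' p = p' := by
  rw [pl_val_low le_rfl]; ring

lemma pl_apply_right {p q p' q' : ℝ} (h : p < q) : pl p q p' q' q = q' := by
  rw [pl_val_mid h le_rfl, div_mul_cancel₀ _ (by linarith : q - p ≠ 0)]
  ring

lemma exists_lt_mem {E : Set ℝ} (hopen : IsOpen E) {x : ℝ} (hx : x ∈ E) :
    ∃ y ∈ E, y < x := by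
  obtain ⟨ε, hε, hball⟩ := Metric.isOpen_iff.mp hopen x hx
  refine ⟨x - ε / 2, hball ?_, by linarith⟩
  rw [Metric.mem_ball, Real.dist_eq]
  have : x - ε / 2 - x = -(ε / 2) := by ring
  rw [this, abs_neg, abs_of_pos (by linarith)]; linarith

lemma exists_gt_mem {E : Set ℝ} (hopen : IsOpen E) {x : ℝ} (hx : x ∈ E) :
    ∃ y ∈ E, x < y := by
  obtain ⟨ε, hε, hball⟩ := Metric.isOpen_iff.mp hopen x hx
  refine ⟨x + ε / 2, hball ?_, by linarith⟩
  rw [Metric.mem_ball, Real.dist_eq]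
  have : x + ε / 2 - x = ε / 2 := by ring
  rw [this, abs_of_pos (by linarith)]; linarith

lemma range_exp_add (a : ℝ) : Set.range (fun x => a + Real.exp x) = Ioi a := by
  ext y
  constructor
  · rintro ⟨x, rfl⟩; exact lt_add_of_pos_right a (Real.exp_pos x)
  · intro hy
    refine ⟨Real.log (y - a), ?_⟩
    show a + Real.exp (Real.log (y - a)) = y
    rw [Real.exp_log (by simpa [sub_pos] using hy)]; ring

lemma range_sub_exp (b : ℝ) : Set.range (fun x => b - Real.exp (-x)) = Iio b := by
  ext y
  constructor
  · rintro ⟨x, rfl⟩; simpa using Real.exp_pos (-x)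
  · intro hy
    refine ⟨-Real.log (b - y), ?_⟩
    show b - Real.exp (-(-Real.log (b - y))) = y
    rw [neg_neg, Real.exp_log (by simpa [sub_pos] using hy)]; ring

lemma range_logistic {a b : ℝ} (hab : a < b) :
    Set.range (fun x => a + (b - a) * (Real.exp x / (1 + Real.exp x))) = Ioo a b := by
  ext y
  constructor
  · rintro ⟨x, rfl⟩
    have h1 : 0 < Real.exp x := Real.exp_pos x
    have h2 : Real.exp x / (1 + Real.exp x) < 1 := by
      rw [div_lt_one (by linarith)]; linarith
    have h3 : 0 < Real.exp x / (1 + Real.exp x) := by positivity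
    constructor <;> nlinarith
  · rintro ⟨hy1, hy2⟩
    refine ⟨Real.log ((y - a) / (b - y)), ?_⟩
    show a + (b - a) * (Real.exp (Real.log ((y - a) / (b - y))) /
      (1 + Real.exp (Real.log ((y - a) / (b - y))))) = y
    have hya : 0 < y - a := by linarith
    have hby : 0 < b - y := by linarith
    rw [Real.exp_log (by positivity)]
    have h4 : 1 + (y - a) / (b - y) = (b - a) / (b - y) := by field_simp; ring
    rw [h4]
    have hba : b - a ≠ 0 := by linarith
    field_simp
    ring

lemma logistic_strictMono {a b : ℝ} (hab : a < b) :
    StrictMono (fun x => a + (b - a) * (Real.exp x / (1 + Real.exp x))) := by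
  intro s t hst
  have h1 : Real.exp s < Real.exp t := Real.exp_lt_exp.mpr hst
  have h2 : (0:ℝ) < 1 + Real.exp s := by positivity
  have h3 : (0:ℝ) < 1 + Real.exp t := by positivity
  have h4 : Real.exp s / (1 + Real.exp s) < Real.exp t / (1 + Real.exp t) := by
    rw [div_lt_div_iff₀ h2 h3]; nlinarith [Real.exp_pos s, Real.exp_pos t]
  show a + (b - a) * (Real.exp s / (1 + Real.exp s)) <
    a + (b - a) * (Real.exp t / (1 + Real.exp t))
  nlinarith

lemma exists_orderIso (E : Set ℝ) (hne : E.Nonempty) (hopen : IsOpen E)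
    (hE : E.OrdConnected) : Nonempty (ℝ ≃o E) := by
  have key : ∀ f : ℝ → ℝ, StrictMono f → Set.range f = E → Nonempty (ℝ ≃o E) := by
    intro f hf hr
    exact ⟨(hf.orderIso f).trans (OrderIso.setCongr _ _ hr)⟩
  rcases hE.isPreconnected.mem_intervals with h | h | h | h | h | h | h | h | h | h
  · exfalso
    obtain ⟨a, b, h⟩ : ∃ a b, E = Icc a b := ⟨_, _, h⟩
    subst h
    have hab : a ≤ b := nonempty_Icc.mp hne
    obtain ⟨y, hy, hlt⟩ := exists_lt_mem hopen (left_mem_Icc.mpr hab)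
    exact absurd hy.1 (not_le.mpr hlt)
  · exfalso
    obtain ⟨a, b, h⟩ : ∃ a b, E = Ico a b := ⟨_, _, h⟩
    subst h
    have hab : a < b := nonempty_Ico.mp hne
    obtain ⟨y, hy, hlt⟩ := exists_lt_mem hopen (left_mem_Ico.mpr hab)
    exact absurd hy.1 (not_le.mpr hlt)
  · exfalso
    obtain ⟨a, b, h⟩ : ∃ a b, E = Ioc a b := ⟨_, _, h⟩
    subst h
    have hab : a < b := nonempty_Ioc.mp hne
    obtain ⟨y, hy, hlt⟩ := exists_gt_mem hopen (right_mem_Ioc.mpr hab)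
    exact absurd hy.2 (not_le.mpr hlt)
  · obtain ⟨a, b, h⟩ : ∃ a b, E = Ioo a b := ⟨_, _, h⟩
    subst h
    have hab : a < b := nonempty_Ioo.mp hne
    exact key _ (logistic_strictMono hab) (range_logistic hab)
  · exfalso
    obtain ⟨a, h⟩ : ∃ a, E = Ici a := ⟨_, h⟩
    subst h
    obtain ⟨y, hy, hlt⟩ := exists_lt_mem hopen self_mem_Ici
    exact absurd hy (not_le.mpr hlt)
  · obtain ⟨a, h⟩ : ∃ a, E = Ioi a := ⟨_, h⟩
    subst h
    refine key (fun x => a + Real.exp x) (fun s t hst => ?_) (range_exp_add a)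
    have := Real.exp_lt_exp.mpr hst
    show a + Real.exp s < a + Real.exp t
    linarith
  · exfalso
    obtain ⟨b, h⟩ : ∃ b, E = Iic b := ⟨_, h⟩
    subst h
    obtain ⟨y, hy, hlt⟩ := exists_gt_mem hopen self_mem_Iic
    exact absurd hy (not_le.mpr hlt)
  · obtain ⟨b, h⟩ : ∃ b, E = Iio b := ⟨_, h⟩
    subst h
    refine key (fun x => b - Real.exp (-x)) (fun s t hst => ?_) (range_sub_exp b)
    have := Real.exp_lt_exp.mpr (neg_lt_neg hst)
    show b - Real.exp (-s) < b - Real.exp (-t)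
    linarith
  · subst h
    exact key id strictMono_id Set.range_id
  · exfalso; subst h; exact Set.not_nonempty_empty hne

lemma exists_phi {E : Set ℝ} (e : ℝ ≃o E) {u v u' v' : E} (huv : u < v) (h' : u' < v') :
    ∃ φ : E → E, StrictMono φ ∧ Function.Bijective φ ∧ φ u = u' ∧ φ v = v' := by
  have hpq : e.symm u < e.symm v := e.symm.strictMono huv
  have hpq' : e.symm u' < e.symm v' := e.symm.strictMono h'
  refine ⟨fun x => e (pl (e.symm u) (e.symm v) (e.symm u') (e.symm v') (e.symm x)),
    ?_, ?_, ?_, ?_⟩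
  · exact fun s t hst => e.strictMono ((pl_strictMono hpq hpq') (e.symm.strictMono hst))
  · exact e.bijective.comp ((pl_bijective hpq hpq').comp e.symm.bijective)
  · show e (pl (e.symm u) (e.symm v) (e.symm u') (e.symm v') (e.symm u)) = u'
    rw [pl_apply_left]
    exact e.apply_symm_apply u'
  · show e (pl (e.symm u) (e.symm v) (e.symm u') (e.symm v') (e.symm v)) = v'
    rw [pl_apply_right hpq]
    exact e.apply_symm_apply v'


/-- On an open real interval `E` with `n ≥ 2`, every symmetric function `F : Eⁿ → ℝ`
that is comparison meaningful on independent ordinal scales is constant; in particular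
it cannot be idempotent. -/
theorem symmetric_comparisonMeaningful_indep_constant (n : ℕ) (hn : 2 ≤ n) (E : Set ℝ)
    (hne : E.Nonempty) (hopen : IsOpen E) (hE : E.OrdConnected)
    (F : (Fin n → E) → ℝ)
    (hsym : ∀ (σ : Equiv.Perm (Fin n)) (x : Fin n → E), F (x ∘ σ) = F x)
    (hcm : ∀ φ : Fin n → E → E,
      (∀ i, StrictMono (φ i) ∧ Function.Bijective (φ i)) →
      ∀ x x' : Fin n → E,
        (F x ≤ F x' ↔ F (fun i => φ i (x i)) ≤ F (fun i => φ i (x' i)))) :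
    (∃ c : ℝ, ∀ x : Fin n → E, F x = c) ∧
    ¬ (∀ e : E, F (fun _ => e) = (e : ℝ)) := by
  obtain ⟨m, rfl⟩ : ∃ m, n = m + 2 := ⟨n - 2, by omega⟩
  obtain ⟨e⟩ := exists_orderIso E hne hopen hE
  have hL1 : ∀ x y : Fin (m + 2) → E, x 0 < y 0 → (∀ i, i ≠ 0 → y i < x i) → F x = F y := by
    intro x y h0 hi
    set σ : Equiv.Perm (Fin (m + 2)) := finRotate (m + 2) with hσ
    set w : Fin (m + 2) → ℝ := fun i => if i = 0 then 0 else (m + 3 : ℝ) - (i : ℕ) with hw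
    set a : Fin (m + 2) → E := fun i => e (w i) with ha
    have hσap : ∀ i, σ i = i + 1 := fun i => finRotate_succ_apply i
    have h10 : (1 : Fin (m + 2)) ≠ 0 := by
      simp [Fin.ext_iff]
    have ha0 : a 0 < a (σ 0) := by
      rw [hσap 0, zero_add]
      apply e.strictMono
      rw [hw]
      simp only [if_pos rfl, if_neg h10]
      have : ((1 : Fin (m + 2)) : ℕ) = 1 := rfl
      rw [this]
      push_cast
      linarith
    have hai : ∀ i : Fin (m + 2), i ≠ 0 → a (σ i) < a i := by
      intro i hi0
      rw [hσap i]
      apply e.strictMono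
      have hv1 : 1 ≤ (i : ℕ) := by
        rcases Nat.eq_zero_or_pos (i : ℕ) with h | h
        · exact absurd (Fin.ext h) hi0
        · exact h
      have hvlt : (i : ℕ) < m + 2 := i.isLt
      by_cases hlast : (i : ℕ) = m + 1
      · have : i + 1 = 0 := by
          apply Fin.ext
          simp [Fin.add_def, hlast]
        rw [hw, this]
        simp only [if_pos rfl, if_neg hi0]
        push_cast [hlast]
        linarith
      · have hlt : (i : ℕ) + 1 < m + 2 := by omega
        have hval : ((i + 1 : Fin (m + 2)) : ℕ) = (i : ℕ) + 1 := by
          simp [Fin.add_def, Nat.mod_eq_of_lt hlt]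
        have hne1 : i + 1 ≠ 0 := by
          intro hcon
          rw [Fin.ext_iff] at hcon
          simp [hval] at hcon
        rw [hw]
        simp only [if_neg hne1, if_neg hi0]
        rw [hval]
        push_cast
        linarith
    have hphi : ∀ i, ∃ φ : E → E, StrictMono φ ∧ Function.Bijective φ ∧
        φ (a i) = x i ∧ φ (a (σ i)) = y i := by
      intro i
      by_cases h : i = 0
      · subst h
        obtain ⟨φ, h1, h2, h3, h4⟩ := exists_phi e ha0 h0
        exact ⟨φ, h1, h2, h3, h4⟩
      · obtain ⟨φ, h1, h2, h3, h4⟩ := exists_phi e (hai i h) (hi i h)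
        exact ⟨φ, h1, h2, h4, h3⟩
    choose φ h1 h2 h3 h4 using hphi
    have hx : (fun i => φ i (a i)) = x := funext h3
    have hy : (fun i => φ i ((a ∘ σ) i)) = y := funext fun i => h4 i
    have hsa : F (a ∘ σ) = F a := hsym σ a
    have c1 := hcm φ (fun i => ⟨h1 i, h2 i⟩) a (a ∘ σ)
    have c2 := hcm φ (fun i => ⟨h1 i, h2 i⟩) (a ∘ σ) a
    rw [hx, hy] at c1
    rw [hx, hy] at c2
    exact le_antisymm (c1.mp (le_of_eq hsa.symm)) (c2.mp (le_of_eq hsa))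
  have hconst : ∀ x y : Fin (m + 2) → E, F x = F y := by
    intro x y
    have hnef : (Finset.univ : Finset (Fin (m + 2))).Nonempty := Finset.univ_nonempty
    set g : Fin (m + 2) → ℝ := fun i => max (e.symm (x i)) (e.symm (y i)) with hg
    set g' : Fin (m + 2) → ℝ := fun i => min (e.symm (x i)) (e.symm (y i)) with hg'
    set M : ℝ := (Finset.univ.sup' hnef g) + 1 with hM
    set m' : ℝ := (Finset.univ.inf' hnef g') - 1 with hm'
    have hMx : ∀ i, e.symm (x i) < M := fun i =>
      lt_of_le_of_lt (le_trans (le_max_left _ _) (Finset.le_sup' g (Finset.mem_univ i)))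
        (by rw [hM]; linarith)
    have hMy : ∀ i, e.symm (y i) < M := fun i =>
      lt_of_le_of_lt (le_trans (le_max_right _ _) (Finset.le_sup' g (Finset.mem_univ i)))
        (by rw [hM]; linarith)
    have hmx : ∀ i, m' < e.symm (x i) := fun i =>
      lt_of_lt_of_le (by rw [hm']; linarith)
        (le_trans (Finset.inf'_le g' (Finset.mem_univ i)) (min_le_left _ _))
    have hmy : ∀ i, m' < e.symm (y i) := fun i =>
      lt_of_lt_of_le (by rw [hm']; linarith)
        (le_trans (Finset.inf'_le g' (Finset.mem_univ i)) (min_le_right _ _))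
    set z : Fin (m + 2) → E := fun i => if i = 0 then e M else e m' with hz
    have hxz : F x = F z := by
      apply hL1
      · show x 0 < z 0
        rw [hz]
        simp only [if_pos rfl]
        rw [← e.apply_symm_apply (x 0)]
        exact e.strictMono (hMx 0)
      · intro i hi
        show z i < x i
        rw [hz]
        simp only [if_neg hi]
        rw [← e.apply_symm_apply (x i)]
        exact e.strictMono (hmx i)
    have hyz : F y = F z := by
      apply hL1
      · show y 0 < z 0
        rw [hz]
        simp only [if_pos rfl]
        rw [← e.apply_symm_apply (y 0)]
        exact e.strictMono (hMy 0)
      · intro i hi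
        show z i < y i
        rw [hz]
        simp only [if_neg hi]
        rw [← e.apply_symm_apply (y i)]
        exact e.strictMono (hmy i)
    rw [hxz, hyz]
  constructor
  · exact ⟨F (fun _ => e 0), fun x => hconst x _⟩
  · intro hid
    have h01 : F (fun _ => e 0) = F (fun _ => e 1) := hconst _ _
    rw [hid (e 0), hid (e 1)] at h01
    have hlt : e (0 : ℝ) < e 1 := e.strictMono (by norm_num)
    rw [← Subtype.coe_lt_coe] at hlt
    exact absurd h01 (ne_of_lt hlt)
end
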